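/- arXiv:math/0501102 — 3 statements merged into one kernel-verified Lean document; each statement's English description precedes it below -/
import Mathlib

section
/- For every n ≥ 1, the number of monotone triangles with n rows and bottom row (1, 2, …, n) equals the number of n × n alternating sign matrices. -/
open MvPolynomial Finset

/-- A monotone triangle with `n` rows, stored with 0-indexed rows: row `r` (for `r < n`)
has `r + 1` entries.  The monotone-triangle conditions correspond to
`a_{i,j} ≤ a_{i-1,j} ≤ a_{i,j+1}` and `a_{i,j} < a_{i,j+1}` for `1 ≤ j < i ≤ n` (1-indexed). -/
def IsMonotoneTriangle {n : ℕ} (a : (i : Fin n) → Fin (i.1 + 1) → ℤ) : Prop :=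
  ∀ (r c : ℕ) (hr : r < n) (h1 : 1 ≤ r) (hc : c < r),
    a ⟨r, hr⟩ ⟨c, by show c < r + 1; omega⟩ ≤
      a ⟨r - 1, by omega⟩ ⟨c, by show c < r - 1 + 1; omega⟩ ∧
    a ⟨r - 1, by omega⟩ ⟨c, by show c < r - 1 + 1; omega⟩ ≤
      a ⟨r, hr⟩ ⟨c + 1, by show c + 1 < r + 1; omega⟩ ∧
    a ⟨r, hr⟩ ⟨c, by show c < r + 1; omega⟩ < a ⟨r, hr⟩ ⟨c + 1, by show c + 1 < r + 1; omega⟩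

/-- The bottom row (row `n-1`, which has `n` entries) is `k`. -/
def HasBottomRow {n : ℕ} (a : (i : Fin n) → Fin (i.1 + 1) → ℤ) (k : Fin n → ℤ) : Prop :=
  ∀ j : Fin n, a ⟨n - 1, by have := j.isLt; omega⟩
    ⟨j.1, by show j.1 < n - 1 + 1; have := j.isLt; omega⟩ = k j

/-- The number of monotone triangles with `n` rows and bottom row `k`. -/
noncomputable def mtCount (n : ℕ) (k : Fin n → ℤ) : ℕ :=
  Nat.card {a : (i : Fin n) → Fin (i.1 + 1) → ℤ // IsMonotoneTriangle a ∧ HasBottomRow a k}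

/-- The nonzero entries of `v` alternate in sign: any two consecutive nonzero entries
(i.e. with only zeros strictly between them) have opposite signs. -/
def AltSign {n : ℕ} (v : Fin n → ℤ) : Prop :=
  ∀ a b : Fin n, a < b → v a ≠ 0 → v b ≠ 0 → (∀ c, a < c → c < b → v c = 0) → v a = -v b

/-- An `n × n` alternating sign matrix: entries in `{0, 1, -1}`, all row and column sums
equal to `1`, and the nonzero entries of every row and every column alternate in sign. -/
def IsASM {n : ℕ} (A : Matrix (Fin n) (Fin n) ℤ) : Prop :=
  (∀ i j, A i j = 0 ∨ A i j = 1 ∨ A i j = -1) ∧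
  (∀ i, ∑ j, A i j = 1) ∧ (∀ j, ∑ i, A i j = 1) ∧
  (∀ i, AltSign fun j => A i j) ∧ (∀ j, AltSign fun i => A i j)

/-- partial sum of the first `m` entries -/
def pSum {n : ℕ} (v : Fin n → ℤ) (m : ℕ) : ℤ :=
  ∑ i ∈ univ.filter (fun i : Fin n => i.1 < m), v i

lemma pSum_zero {n : ℕ} (v : Fin n → ℤ) : pSum v 0 = 0 := by
  simp [pSum]

lemma psum_succ {n : ℕ} (v : Fin n → ℤ) (m : ℕ) (h : m < n) :
    pSum v (m + 1) = pSum v m + v ⟨m, h⟩ := by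
  unfold pSum
  rw [show (univ.filter (fun i : Fin n => i.1 < m + 1)) =
      insert ⟨m, h⟩ (univ.filter (fun i : Fin n => i.1 < m)) from ?_,
    Finset.sum_insert (by simp)]
  · ring
  · ext i; simp only [mem_insert, mem_filter, mem_univ, true_and, Fin.ext_iff]
    omega

lemma psum_of_le {n : ℕ} (v : Fin n → ℤ) (m : ℕ) (h : n ≤ m) :
    pSum v m = ∑ i, v i := by
  unfold pSum
  congr 1
  ext i; simp only [mem_filter, mem_univ, true_and, iff_true]
  omega

lemma psum_succ' {n : ℕ} (v : Fin n → ℤ) (m : ℕ) (h : n ≤ m) :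
    pSum v (m + 1) = pSum v m := by
  rw [psum_of_le v m h, psum_of_le v (m+1) (by omega)]

/-- constant on zero stretches -/
lemma psum_congr_zero {n : ℕ} (v : Fin n → ℤ) (m1 m2 : ℕ) (h : m1 ≤ m2)
    (hz : ∀ c : Fin n, m1 ≤ c.1 → c.1 < m2 → v c = 0) : pSum v m2 = pSum v m1 := by
  induction m2 with
  | zero => have : m1 = 0 := by omega
            rw [this]
  | succ m ih =>
    rcases Nat.lt_or_ge m n with hm | hm
    · rcases Nat.lt_or_ge m m1 with h1 | h1
      · have : m1 = m + 1 := by omega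
        rw [this]
      · rw [psum_succ v m hm, hz ⟨m, hm⟩ h1 (Nat.lt_succ_self m),
          ih h1 (fun c hc1 hc2 => hz c hc1 (by omega))]
        ring
    · rw [psum_succ' v m hm]
      rcases Nat.lt_or_ge m m1 with h1 | h1
      · have : m1 = m + 1 := by omega
        rw [this, psum_succ' v m hm]
      · exact ih h1 (fun c hc1 hc2 => hz c hc1 (by omega))

lemma line_forward {n : ℕ} (v : Fin n → ℤ) (h01 : ∀ i, v i = 0 ∨ v i = 1 ∨ v i = -1)
    (hsum : ∑ i, v i = 1) (halt : AltSign v) (m : ℕ) :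
    pSum v m = 0 ∨ pSum v m = 1 := by
  classical
  have hN : (univ.filter (fun i : Fin n => v i ≠ 0)).Nonempty := by
    by_contra h
    rw [not_nonempty_iff_eq_empty, filter_eq_empty_iff] at h
    have : ∑ i, v i = 0 := Finset.sum_eq_zero (fun i _ => by
      have := h (mem_univ i); simpa using this)
    omega
  set b0 := (univ.filter (fun i : Fin n => v i ≠ 0)).min' hN with hb0
  have hb0ne : v b0 ≠ 0 := by
    have := Finset.min'_mem _ hN
    simpa [← hb0] using (Finset.mem_filter.mp this).2
  set s := v b0 with hs
  -- main induction claim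
  have claim : ∀ m : ℕ, (pSum v m = 0 ∨ pSum v m = s) ∧
      ∀ b : Fin n, m ≤ b.1 → v b ≠ 0 → (∀ c : Fin n, m ≤ c.1 → c < b → v c = 0) →
        v b = s - 2 * pSum v m := by
    intro m
    induction m with
    | zero =>
      refine ⟨Or.inl (pSum_zero v), ?_⟩
      intro b _ hb hzero
      have hble : b0 ≤ b := Finset.min'_le _ _ (by simp [hb])
      have : b0 = b := by
        rcases lt_or_eq_of_le hble with h | h
        · exact absurd (hzero b0 (by omega) h) hb0ne
        · exact h
      rw [pSum_zero]; rw [← this]; ring_nf; exact hs.symm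
    | succ m ih =>
      rcases Nat.lt_or_ge m n with hm | hm
      swap
      · rw [psum_succ' v m hm]
        refine ⟨ih.1, ?_⟩
        intro b hb _ _
        have := b.isLt; omega
      set im : Fin n := ⟨m, hm⟩ with him
      rw [psum_succ v m hm]
      by_cases hvm : v im = 0
      · rw [hvm, add_zero]
        refine ⟨ih.1, ?_⟩
        intro b hb hbne hzero
        refine ih.2 b (by omega) hbne ?_
        intro c hc1 hc2
        rcases Nat.lt_or_ge c.1 (m+1) with h | h
        · have : c = im := Fin.ext (show c.1 = m by omega)
          rw [this, hvm]
        · exact hzero c h hc2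
      · have hvim : v im = s - 2 * pSum v m := by
          refine ih.2 im le_rfl hvm ?_
          intro c hc1 hc2
          exfalso
          have h1 : c.1 < m := hc2
          have h2 : m ≤ c.1 := hc1
          omega
        constructor
        · rcases ih.1 with h | h <;> rw [hvim, h]
          · right; ring
          · left; ring
        · intro b hb hbne hzero
          have hlt : im < b := show m < b.1 by omega
          have key := halt im b hlt hvm hbne (fun c hc1 hc2 => by
            refine hzero c ?_ hc2
            have h1 : m < c.1 := hc1
            omega)
          rw [hvim] at key
          -- key : s - 2*pSum v m = - v b
          have hvb : v b = -(s - 2 * pSum v m) := by omega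
          rw [hvb, hvim]; ring
  have hlast : pSum v n = 1 := by rw [psum_of_le v n le_rfl]; exact hsum
  have hs1 : s = 1 := by
    rcases (claim n).1 with h | h <;> omega
  rcases (claim m).1 with h | h
  · exact Or.inl h
  · right; omega

lemma line_backward {n : ℕ} (v : Fin n → ℤ)
    (h : ∀ m, pSum v m = 0 ∨ pSum v m = 1) (hsum : pSum v n = 1) :
    (∀ i, v i = 0 ∨ v i = 1 ∨ v i = -1) ∧ (∑ i, v i = 1) ∧ AltSign v := by
  have hv : ∀ i : Fin n, v i = pSum v (i.1 + 1) - pSum v i.1 := by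
    intro i
    rw [psum_succ v i.1 i.isLt]
    ring_nf
  refine ⟨?_, ?_, ?_⟩
  · intro i
    rw [hv i]
    rcases h (i.1+1) with h1 | h1 <;> rcases h i.1 with h2 | h2 <;> omega
  · rw [← psum_of_le v n le_rfl]; exact hsum
  · intro a b hab hane hbne hzero
    have hlt := Fin.lt_def.mp hab
    have hstretch : pSum v b.1 = pSum v (a.1 + 1) := by
      apply psum_congr_zero v _ _ (by omega)
      intro c hc1 hc2
      exact hzero c (Fin.lt_def.mpr (by omega)) (Fin.lt_def.mpr (by omega))
    have hane' : pSum v (a.1 + 1) - pSum v a.1 ≠ 0 := by rw [← hv a]; exact hane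
    have hbne' : pSum v (b.1 + 1) - pSum v (a.1 + 1) ≠ 0 := by
      rw [← hstretch, ← hv b]; exact hbne
    rw [hv a, hv b, hstretch]
    have h1 := h (a.1+1); have h2 := h a.1; have h3 := h (b.1+1)
    omega

lemma isASM_iff {n : ℕ} (A : Matrix (Fin n) (Fin n) ℤ) :
    IsASM A ↔ ((∀ i m, pSum (fun j => A i j) m = 0 ∨ pSum (fun j => A i j) m = 1) ∧
      (∀ i, pSum (fun j => A i j) n = 1) ∧
      (∀ j m, pSum (fun i => A i j) m = 0 ∨ pSum (fun i => A i j) m = 1) ∧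
      (∀ j, pSum (fun i => A i j) n = 1)) := by
  constructor
  · rintro ⟨h01, hrow, hcol, haltr, haltc⟩
    exact ⟨fun i m => line_forward _ (fun j => h01 i j) (hrow i) (haltr i) m,
      fun i => by rw [psum_of_le _ n le_rfl]; exact hrow i,
      fun j m => line_forward _ (fun i => h01 i j) (hcol j) (haltc j) m,
      fun j => by rw [psum_of_le _ n le_rfl]; exact hcol j⟩
  · rintro ⟨hr, hrt, hc, hct⟩
    have hR := fun i => line_backward (fun j => A i j) (hr i) (hrt i)
    have hC := fun j => line_backward (fun i => A i j) (hc j) (hct j)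
    exact ⟨fun i j => (hR i).1 j, fun i => (hR i).2.1, fun j => (hC j).2.1,
      fun i => (hR i).2.2, fun j => (hC j).2.2⟩

-- helper: sum of 0/1 function equals card of its support
lemma sum_eq_card {n : ℕ} (f : Fin n → ℤ) (h : ∀ j, f j = 0 ∨ f j = 1) :
    ∑ j, f j = (univ.filter (fun j => f j = 1)).card := by
  classical
  rw [Finset.card_filter]
  push_cast
  apply Finset.sum_congr rfl
  intro j _
  rcases h j with h1 | h1 <;> simp [h1]

-- initial segment lemma for strictly monotone maps into Fin n (value < m cut)
lemma initseg {k n : ℕ} (u : Fin k → Fin n) (hu : StrictMono u) (m : ℕ) (c : Fin k) :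
    (u c).1 < m ↔ c.1 < (univ.filter (fun c => (u c).1 < m)).card := by
  constructor
  · intro h
    have hsub : Finset.Iic c ⊆ univ.filter (fun c => (u c).1 < m) := by
      intro c' hc'
      simp only [Finset.mem_Iic] at hc'
      simp only [mem_filter, mem_univ, true_and]
      calc (u c').1 ≤ (u c).1 := by
            rcases lt_or_eq_of_le hc' with h' | h'
            · exact le_of_lt (hu h')
            · rw [h']
        _ < m := h
    have := Finset.card_le_card hsub
    rw [Fin.card_Iic] at this
    omega
  · intro h
    by_contra hcon
    have hsub : univ.filter (fun c' => (u c').1 < m) ⊆ Finset.Iio c := by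
      intro c' hc'
      simp only [mem_filter, mem_univ, true_and] at hc'
      simp only [Finset.mem_Iio]
      by_contra h'
      have : c ≤ c' := le_of_not_gt h'
      have : (u c).1 ≤ (u c').1 := by
        rcases lt_or_eq_of_le this with h'' | h''
        · exact le_of_lt (hu h'')
        · rw [h'']
      omega
    have := Finset.card_le_card hsub
    rw [Fin.card_Iio] at this
    omega

section Tri
variable {n : ℕ} (a : (i : Fin n) → Fin (i.1 + 1) → ℤ)

noncomputable def chi (i : Fin n) (j : Fin n) : ℤ :=
  if ∃ c, a i c = (j : ℤ) + 1 then 1 else 0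

lemma chi_mem (i j : Fin n) : chi a i j = 0 ∨ chi a i j = 1 := by
  unfold chi; split <;> simp

noncomputable def triMat : Matrix (Fin n) (Fin n) ℤ :=
  fun i j => chi a i j -
    (if h : 1 ≤ i.1 then chi a ⟨i.1 - 1, lt_of_le_of_lt (Nat.sub_le _ _) i.isLt⟩ j else 0)

noncomputable def cnt (i : Fin n) (m : ℕ) : ℕ :=
  ((univ : Finset (Fin (i.1 + 1))).filter (fun c => a i c ≤ (m : ℤ))).card

variable (ht : IsMonotoneTriangle a) (hb : HasBottomRow a (fun j => (j : ℤ) + 1))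

include ht in
lemma row_strictMono (i : Fin n) : StrictMono (a i) := by
  rw [Fin.strictMono_iff_lt_succ]
  intro c
  have hc := c.isLt
  have := (ht i.1 c.1 i.isLt (by omega) hc).2.2
  exact this

include ht hb in
lemma tri_bounds (i : Fin n) (c : Fin (i.1 + 1)) : 1 ≤ a i c ∧ a i c ≤ n := by
  suffices h : ∀ d (i : Fin n) (c : Fin (i.1 + 1)), i.1 + d = n - 1 → 1 ≤ a i c ∧ a i c ≤ n by
    exact h (n - 1 - i.1) i c (by have := i.isLt; omega)
  intro d
  induction d with
  | zero =>
    intro i c hi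
    have hn : 0 < n := i.pos
    have hn1 : i = ⟨n - 1, Nat.sub_lt hn one_pos⟩ := Fin.ext (show i.1 = n - 1 by omega)
    subst hn1
    have hcn : c.1 < n := by have := c.isLt; omega
    have := hb ⟨c.1, hcn⟩
    rw [show a ⟨n-1, _⟩ (⟨(⟨c.1, hcn⟩ : Fin n).1, _⟩ : Fin (n-1+1)) = a ⟨n-1, _⟩ c from rfl] at this
    rw [this]
    constructor <;> push_cast <;> omega
  | succ d ihd =>
    intro i c hi
    have h1 : i.1 + 1 < n := by have := i.isLt; omega
    have hcr : c.1 < i.1 + 1 := c.isLt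
    have hlow := (ht (i.1 + 1) c.1 h1 (by omega) (by omega)).1
    have hhigh := (ht (i.1 + 1) c.1 h1 (by omega) (by omega)).2.1
    have hb1 := ihd ⟨i.1 + 1, h1⟩ ⟨c.1, by show c.1 < i.1 + 1 + 1; omega⟩
      (by show i.1 + 1 + d = n - 1; omega)
    have hb2 := ihd ⟨i.1 + 1, h1⟩ ⟨c.1 + 1, by show c.1 + 1 < i.1 + 1 + 1; omega⟩
      (by show i.1 + 1 + d = n - 1; omega)
    constructor
    · calc (1:ℤ) ≤ a ⟨i.1+1, h1⟩ ⟨c.1, by show c.1 < i.1 + 1 + 1; omega⟩ := hb1.1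
        _ ≤ a i c := hlow
    · calc a i c ≤ a ⟨i.1+1, h1⟩ ⟨c.1+1, by show c.1 + 1 < i.1 + 1 + 1; omega⟩ := hhigh
        _ ≤ n := hb2.2


include ht hb in
lemma sum_chi (i : Fin n) (m : ℕ) :
    pSum (fun j => chi a i j) m = (cnt a i m : ℤ) := by
  classical
  have hbd := fun c => tri_bounds a ht hb i c
  have hn : 0 < n := i.pos
  have step1 : pSum (fun j => chi a i j) m =
      (((univ : Finset (Fin n)).filter (fun j : Fin n => j.1 < m ∧ ∃ c, a i c = (j : ℤ) + 1)).card : ℤ) := by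
    unfold pSum chi
    rw [Finset.sum_boole, Finset.filter_filter]
  rw [step1]
  congr 1
  refine (Finset.card_nbij (fun c => (⟨(a i c).toNat - 1, by have := hbd c; omega⟩ : Fin n))
    ?_ ?_ ?_).symm
  · intro c hc
    simp only [Finset.mem_coe, mem_filter, mem_univ, true_and] at hc ⊢
    have := hbd c
    refine ⟨by omega, ⟨c, ?_⟩⟩
    show a i c = (((a i c).toNat - 1 : ℕ) : ℤ) + 1
    omega
  · intro c1 h1 c2 h2 he
    simp only [Fin.mk.injEq] at he
    have b1 := hbd c1; have b2 := hbd c2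
    exact (row_strictMono a ht i).injective (show a i c1 = a i c2 by omega)
  · intro j hj
    simp only [Finset.coe_filter, Set.mem_setOf_eq, mem_univ, true_and] at hj
    obtain ⟨hjm, c, hc⟩ := hj
    refine ⟨c, ?_, ?_⟩
    · simp only [Finset.coe_filter, Set.mem_setOf_eq, mem_univ, true_and]
      have : (j : ℤ) + 1 ≤ m := by omega
      omega
    · apply Fin.ext
      show (a i c).toNat - 1 = j.1
      omega

include ht hb in
lemma cnt_total (i : Fin n) : cnt a i n = i.1 + 1 := by
  unfold cnt
  rw [Finset.filter_true_of_mem (fun c _ => (tri_bounds a ht hb i c).2)]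
  simp

include ht in
lemma cnt_le (r : ℕ) (hr : r < n) (h1 : 1 ≤ r) (m : ℕ) :
    cnt a ⟨r - 1, by omega⟩ m ≤ cnt a ⟨r, hr⟩ m ∧
      cnt a ⟨r, hr⟩ m ≤ cnt a ⟨r - 1, by omega⟩ m + 1 := by
  classical
  constructor
  · apply Finset.card_le_card_of_injOn
      (fun c => ⟨c.1, by have h' : c.1 < r - 1 + 1 := c.isLt; show c.1 < r + 1; omega⟩)
    · intro c hc
      simp only [Finset.mem_coe, mem_filter, mem_univ, true_and] at hc ⊢
      have hcr : c.1 < r := by have h' : c.1 < r - 1 + 1 := c.isLt; omega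
      have hle := (ht r c.1 hr h1 hcr).1
      exact le_trans hle hc
    · intro c1 _ c2 _ he
      simp only [Fin.mk.injEq] at he
      exact Fin.ext he
  · set s := (univ : Finset (Fin (r + 1))).filter
        (fun c => a ⟨r, hr⟩ c ≤ (m : ℤ)) with hs
    have h0 : s.card ≤ (s.erase ⟨0, Nat.succ_pos r⟩).card + 1 := by
      rcases Finset.decidableMem (⟨0, Nat.succ_pos r⟩ : Fin (r+1)) s with hmem | hmem
      · rw [Finset.erase_eq_of_notMem hmem]; omega
      · rw [Finset.card_erase_of_mem hmem]
        have := Finset.card_pos.mpr ⟨_, hmem⟩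
        omega
    refine le_trans h0 ?_
    have h2 : (s.erase ⟨0, Nat.succ_pos r⟩).card ≤ cnt a ⟨r - 1, by omega⟩ m := by
      apply Finset.card_le_card_of_injOn
        (fun c => ⟨c.1 - 1, by have h' : c.1 < r + 1 := c.isLt; show c.1 - 1 < r - 1 + 1; omega⟩)
      · intro c hc
        rw [Finset.mem_coe, Finset.mem_erase] at hc
        obtain ⟨hne, hcs⟩ := hc
        simp only [hs, Finset.mem_coe, mem_filter, mem_univ, true_and] at hcs ⊢
        have hc1 : 1 ≤ c.1 := by
          by_contra h
          exact hne (Fin.ext (show c.1 = 0 by omega))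
        have hcr : c.1 - 1 < r := by have h' : c.1 < r + 1 := c.isLt; omega
        have hle := (ht r (c.1 - 1) hr h1 hcr).2.1
        have he : (⟨c.1 - 1 + 1, by show c.1 - 1 + 1 < r + 1; have h' : c.1 < r + 1 := c.isLt; omega⟩ :
            Fin (r + 1)) = c := Fin.ext (show c.1 - 1 + 1 = c.1 by omega)
        rw [he] at hle
        exact le_trans hle hcs
      · intro c1 hc1 c2 hc2 he
        rw [Finset.mem_coe, Finset.mem_erase] at hc1 hc2
        have h1' : 1 ≤ c1.1 := by by_contra h; exact hc1.1 (Fin.ext (show c1.1 = 0 by omega))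
        have h2' : 1 ≤ c2.1 := by by_contra h; exact hc2.1 (Fin.ext (show c2.1 = 0 by omega))
        simp only [Fin.mk.injEq] at he
        exact Fin.ext (by omega)
    omega

lemma triMat_pos (i : Fin n) (h : 1 ≤ i.1) (j : Fin n) :
    triMat a i j = chi a i j -
      chi a ⟨i.1 - 1, lt_of_le_of_lt (Nat.sub_le _ _) i.isLt⟩ j := by
  unfold triMat; rw [dif_pos h]

lemma triMat_zero (i : Fin n) (h : i.1 = 0) (j : Fin n) :
    triMat a i j = chi a i j := by
  unfold triMat; rw [dif_neg (by omega)]; ring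

lemma colP_succ (j : Fin n) (m : ℕ) (hm : m < n) :
    pSum (fun i => triMat a i j) (m + 1) = chi a ⟨m, hm⟩ j := by
  induction m with
  | zero =>
    rw [psum_succ _ 0 hm, pSum_zero, triMat_zero a ⟨0, hm⟩ rfl j]
    ring
  | succ m ih =>
    rw [psum_succ _ (m + 1) hm, ih (by omega),
      triMat_pos a ⟨m + 1, hm⟩ (by show 1 ≤ m + 1; omega) j]
    have he : (⟨(⟨m + 1, hm⟩ : Fin n).1 - 1,
        lt_of_le_of_lt (Nat.sub_le _ _) (⟨m + 1, hm⟩ : Fin n).isLt⟩ : Fin n) =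
        ⟨m, by omega⟩ := rfl
    rw [he]
    ring

include hb in
lemma colP_total (j : Fin n) : pSum (fun i => triMat a i j) n = 1 := by
  have hn : 0 < n := j.pos
  have key := colP_succ a j (n - 1) (by omega)
  rw [Nat.sub_add_cancel hn] at key
  rw [key]
  unfold chi
  rw [if_pos]
  exact ⟨⟨j.1, by show j.1 < n - 1 + 1; have := j.isLt; omega⟩, hb j⟩

include hb in
lemma colP_mem (j : Fin n) (m : ℕ) :
    pSum (fun i => triMat a i j) m = 0 ∨ pSum (fun i => triMat a i j) m = 1 := by
  rcases Nat.eq_zero_or_pos m with h | h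
  · subst h; left; exact pSum_zero _
  rcases Nat.lt_or_ge (m - 1) n with h2 | h2
  · have : m = (m - 1) + 1 := by omega
    rw [this, colP_succ a j (m - 1) h2]
    exact chi_mem a _ j
  · have hn : 0 < n := j.pos
    rw [psum_of_le _ m (by omega), ← psum_of_le _ n le_rfl]
    right
    exact colP_total a hb j

include ht hb in
lemma rowP_eq (i : Fin n) (m : ℕ) :
    pSum (fun j => triMat a i j) m = (cnt a i m : ℤ) -
      (if h : 1 ≤ i.1 then
        (cnt a ⟨i.1 - 1, lt_of_le_of_lt (Nat.sub_le _ _) i.isLt⟩ m : ℤ) else 0) := by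
  by_cases h : 1 ≤ i.1
  · simp only [dif_pos h]
    have e1 := sum_chi a ht hb i m
    have e2 := sum_chi a ht hb ⟨i.1 - 1, lt_of_le_of_lt (Nat.sub_le _ _) i.isLt⟩ m
    unfold pSum at e1 e2 ⊢
    simp only [triMat_pos a i h]
    rw [Finset.sum_sub_distrib, e1, e2]
  · simp only [dif_neg h]
    have e1 := sum_chi a ht hb i m
    unfold pSum at e1 ⊢
    simp only [triMat_zero a i (by omega)]
    rw [e1]
    ring

include ht hb in
lemma rowP_mem (i : Fin n) (m : ℕ) :
    pSum (fun j => triMat a i j) m = 0 ∨ pSum (fun j => triMat a i j) m = 1 := by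
  rw [rowP_eq a ht hb i m]
  by_cases h : 1 ≤ i.1
  · simp only [dif_pos h]
    have := cnt_le a ht i.1 i.isLt h m
    have he : (⟨i.1, i.isLt⟩ : Fin n) = i := Fin.ext rfl
    rw [he] at this
    omega
  · simp only [dif_neg h]
    have h1 : cnt a i m ≤ 1 := by
      unfold cnt
      calc _ ≤ (univ : Finset (Fin (i.1 + 1))).card := Finset.card_filter_le _ _
        _ = i.1 + 1 := by simp
        _ = 1 := by omega
    omega

include ht hb in
lemma rowP_total (i : Fin n) : pSum (fun j => triMat a i j) n = 1 := by
  rw [rowP_eq a ht hb i n, cnt_total a ht hb i]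
  by_cases h : 1 ≤ i.1
  · rw [dif_pos h, cnt_total a ht hb]
    show ((i.1 + 1 : ℕ) : ℤ) - ((i.1 - 1 + 1 : ℕ) : ℤ) = 1
    omega
  · rw [dif_neg h]
    show ((i.1 + 1 : ℕ) : ℤ) - 0 = 1
    omega

include ht hb in
lemma triMat_isASM : IsASM (triMat a) :=
  (isASM_iff _).mpr ⟨rowP_mem a ht hb, rowP_total a ht hb, colP_mem a hb, colP_total a hb⟩

end Tri

lemma counting_interlace {n ks kt : ℕ} (hk : kt = ks + 1)
    (s : Fin ks → Fin n) (t : Fin kt → Fin n) (hs : StrictMono s) (ht : StrictMono t)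
    (hcnt : ∀ m : ℕ,
      (univ.filter (fun c => (s c).1 < m)).card ≤ (univ.filter (fun c => (t c).1 < m)).card ∧
      (univ.filter (fun c => (t c).1 < m)).card ≤ (univ.filter (fun c => (s c).1 < m)).card + 1) :
    ∀ (c : ℕ) (hc : c < ks),
      (t ⟨c, by omega⟩).1 ≤ (s ⟨c, hc⟩).1 ∧ (s ⟨c, hc⟩).1 ≤ (t ⟨c + 1, by omega⟩).1 := by
  intro c hc
  constructor
  · by_contra hcon
    push_neg at hcon
    set m := (s ⟨c, hc⟩).1 + 1 with hm
    have h1' : c < (univ.filter (fun c => (s c).1 < m)).card :=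
      (initseg s hs m ⟨c, hc⟩).mp (by omega)
    have h2' : (univ.filter (fun c => (t c).1 < m)).card ≤ c := by
      by_contra h'
      push_neg at h'
      have := (initseg t ht m ⟨c, by omega⟩).mpr h'
      omega
    have := (hcnt m).1
    omega
  · by_contra hcon
    push_neg at hcon
    set m := (t ⟨c + 1, by omega⟩).1 + 1 with hm
    have h1' : c + 1 < (univ.filter (fun c => (t c).1 < m)).card :=
      (initseg t ht m ⟨c + 1, by omega⟩).mp (by omega)
    have h2' : (univ.filter (fun c => (s c).1 < m)).card ≤ c := by
      by_contra h'
      push_neg at h'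
      have := (initseg s hs m ⟨c, hc⟩).mpr h'
      omega
    have := (hcnt m).2
    omega

section ASMside
variable {n : ℕ} (A : Matrix (Fin n) (Fin n) ℤ)

/-- set of columns whose partial sum through row `i` is 1 -/
noncomputable def colS (i : Fin n) : Finset (Fin n) :=
  univ.filter (fun j => pSum (fun i' => A i' j) (i.1 + 1) = 1)

variable (hA : IsASM A)

include hA in
lemma card_colS (i : Fin n) : (colS A i).card = i.1 + 1 := by
  obtain ⟨hr, hrt, hc, hct⟩ := (isASM_iff A).mp hA
  have h1 : ∑ j, pSum (fun i' => A i' j) (i.1 + 1) = ((colS A i).card : ℤ) := by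
    unfold colS
    exact sum_eq_card _ (fun j => hc j (i.1 + 1))
  have h2 : ∑ j, pSum (fun i' => A i' j) (i.1 + 1) = (i.1 + 1 : ℤ) := by
    unfold pSum
    rw [Finset.sum_comm]
    rw [Finset.sum_congr rfl (fun i' hi' => by
      rw [show ∑ j, A i' j = 1 from by
        have := hrt i'
        rw [psum_of_le (fun j => A i' j) n le_rfl] at this
        exact this])]
    rw [Finset.sum_const, nsmul_eq_mul, mul_one]
    congr 1
    rw [show univ.filter (fun i' : Fin n => i'.1 < i.1 + 1) = Finset.Iic i from by
      ext x
      simp only [mem_filter, mem_univ, true_and, Finset.mem_Iic, Fin.le_def]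
      omega]
    rw [Fin.card_Iic]
  have := h1.symm.trans h2
  exact_mod_cast this

/-- the triangle associated to an ASM -/
noncomputable def asmTri : (i : Fin n) → Fin (i.1 + 1) → ℤ :=
  fun i c => ((((colS A i).orderEmbOfFin (card_colS A hA i)) c : Fin n) : ℤ) + 1

/-- count of columns in `colS A i` with index < m -/
noncomputable def Dcnt (i : Fin n) (m : ℕ) : ℕ :=
  (univ.filter (fun c : Fin (i.1 + 1) =>
    (((colS A i).orderEmbOfFin (card_colS A hA i)) c).1 < m)).card

include hA in
lemma sum_colP (k : ℕ) (hk : k < n) (m : ℕ) :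
    ∑ j ∈ univ.filter (fun j : Fin n => j.1 < m), pSum (fun i' => A i' j) (k + 1) =
      (Dcnt A hA ⟨k, hk⟩ m : ℤ) := by
  obtain ⟨hr, hrt, hc, hct⟩ := (isASM_iff A).mp hA
  have step1 : ∑ j ∈ univ.filter (fun j : Fin n => j.1 < m), pSum (fun i' => A i' j) (k + 1) =
      (((univ.filter (fun j : Fin n => j.1 < m)).filter
        (fun j => pSum (fun i' => A i' j) (k + 1) = 1)).card : ℤ) := by
    rw [Finset.card_filter]
    push_cast
    apply Finset.sum_congr rfl
    intro j _
    rcases hc j (k + 1) with h1 | h1 <;> simp [h1]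
  rw [step1, Finset.filter_filter]
  congr 1
  refine Eq.symm (Finset.card_nbij
    (fun c => ((colS A ⟨k, hk⟩).orderEmbOfFin (card_colS A hA ⟨k, hk⟩)) c) ?_ ?_ ?_)
  · intro c hcm
    simp only [Finset.mem_coe, mem_filter, mem_univ, true_and] at hcm ⊢
    have hmem : (((colS A ⟨k, hk⟩).orderEmbOfFin (card_colS A hA ⟨k, hk⟩)) c) ∈ colS A ⟨k, hk⟩ :=
      Finset.orderEmbOfFin_mem _ _ _
    unfold colS at hmem
    simp only [mem_filter, mem_univ, true_and] at hmem
    exact ⟨hcm, hmem⟩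
  · intro c1 _ c2 _ he
    exact ((colS A ⟨k, hk⟩).orderEmbOfFin (card_colS A hA ⟨k, hk⟩)).injective he
  · intro j hj
    simp only [Finset.coe_filter, Set.mem_setOf_eq, mem_univ, true_and] at hj
    obtain ⟨hjm, hj1⟩ := hj
    have hjS : j ∈ colS A ⟨k, hk⟩ := by
      unfold colS
      simp only [mem_filter, mem_univ, true_and]
      exact hj1
    have : j ∈ Set.range ((colS A ⟨k, hk⟩).orderEmbOfFin (card_colS A hA ⟨k, hk⟩)) := by
      rw [Finset.range_orderEmbOfFin]; exact hjS
    obtain ⟨c, hc'⟩ := this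
    refine ⟨c, ?_, hc'⟩
    simp only [Finset.coe_filter, Set.mem_setOf_eq, mem_univ, true_and]
    rw [hc']
    exact hjm

include hA in
lemma rowP_Dcnt (r : ℕ) (hr : r < n) (h1 : 1 ≤ r) (m : ℕ) :
    pSum (fun j => A ⟨r, hr⟩ j) m =
      (Dcnt A hA ⟨r, hr⟩ m : ℤ) - (Dcnt A hA ⟨r - 1, by omega⟩ m : ℤ) := by
  have key : ∀ j : Fin n, A ⟨r, hr⟩ j =
      pSum (fun i' => A i' j) (r + 1) - pSum (fun i' => A i' j) r := by
    intro j
    rw [psum_succ (fun i' => A i' j) r hr]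
    ring
  have e1 := sum_colP A hA r hr m
  have e2 := sum_colP A hA (r - 1) (by omega) m
  rw [show r - 1 + 1 = r from by omega] at e2
  unfold pSum
  rw [Finset.sum_congr rfl (fun j _ => key j), Finset.sum_sub_distrib, e1, e2]

include hA in
lemma Dcnt_steps (r : ℕ) (hr : r < n) (h1 : 1 ≤ r) (m : ℕ) :
    Dcnt A hA ⟨r - 1, by omega⟩ m ≤ Dcnt A hA ⟨r, hr⟩ m ∧
      Dcnt A hA ⟨r, hr⟩ m ≤ Dcnt A hA ⟨r - 1, by omega⟩ m + 1 := by
  obtain ⟨hrow, hrt, hc, hct⟩ := (isASM_iff A).mp hA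
  have := hrow ⟨r, hr⟩ m
  rw [rowP_Dcnt A hA r hr h1 m] at this
  omega

include hA in
lemma asmTri_isMT : IsMonotoneTriangle (asmTri A hA) := by
  intro r c hr h1 hc
  have hq : r - 1 < n := by omega
  have hil := counting_interlace (show r + 1 = (r - 1 + 1) + 1 from by omega)
    (fun c => ((colS A ⟨r - 1, hq⟩).orderEmbOfFin (card_colS A hA ⟨r - 1, hq⟩)) c)
    (fun c => ((colS A ⟨r, hr⟩).orderEmbOfFin (card_colS A hA ⟨r, hr⟩)) c)
    (fun _ _ h => ((colS A ⟨r - 1, hq⟩).orderEmbOfFin (card_colS A hA ⟨r - 1, hq⟩)).strictMono h)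
    (fun _ _ h => ((colS A ⟨r, hr⟩).orderEmbOfFin (card_colS A hA ⟨r, hr⟩)).strictMono h)
    (fun m => Dcnt_steps A hA r hr h1 m)
  have hI := hil c (by omega)
  refine ⟨?_, ?_, ?_⟩
  · exact add_le_add_left (Int.ofNat_le.mpr hI.1) 1
  · exact add_le_add_left (Int.ofNat_le.mpr hI.2) 1
  · refine add_lt_add_left (Int.ofNat_lt.mpr ?_) 1
    exact ((colS A ⟨r, hr⟩).orderEmbOfFin (card_colS A hA ⟨r, hr⟩)).strictMono
      (show (⟨c, by omega⟩ : Fin (r + 1)) < ⟨c + 1, by omega⟩ from by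
        show c < c + 1; omega)

include hA in
lemma asmTri_bottom : HasBottomRow (asmTri A hA) (fun j => (j : ℤ) + 1) := by
  intro j
  have hn : 0 < n := j.pos
  have hq : n - 1 < n := by omega
  have hcard := card_colS A hA ⟨n - 1, hq⟩
  have huniv : colS A ⟨n - 1, hq⟩ = univ := by
    apply Finset.eq_univ_of_card
    rw [hcard]
    simp only [Fintype.card_fin]
    show n - 1 + 1 = n
    omega
  have hf : (fun c : Fin (n - 1 + 1) => (⟨c.1, by have := c.isLt; omega⟩ : Fin n)) =
      ⇑((colS A ⟨n - 1, hq⟩).orderEmbOfFin (card_colS A hA ⟨n - 1, hq⟩)) := by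
    apply Finset.orderEmbOfFin_unique
    · intro x
      rw [huniv]
      exact mem_univ _
    · intro x y hxy
      show x.1 < y.1
      exact hxy
  have := congrFun hf ⟨j.1, show j.1 < n - 1 + 1 from by have := j.isLt; omega⟩
  show ((((colS A ⟨n - 1, hq⟩).orderEmbOfFin (card_colS A hA ⟨n - 1, hq⟩))
    ⟨j.1, show j.1 < n - 1 + 1 from by have := j.isLt; omega⟩ : Fin n) : ℤ) + 1 = (j : ℤ) + 1
  rw [← this]

end ASMside

section Inv
variable {n : ℕ}

lemma chi_asmTri (A : Matrix (Fin n) (Fin n) ℤ) (hA : IsASM A) (i j : Fin n) :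
    chi (asmTri A hA) i j = pSum (fun i' => A i' j) (i.1 + 1) := by
  obtain ⟨hr, hrt, hc, hct⟩ := (isASM_iff A).mp hA
  rcases hc j (i.1 + 1) with h | h <;> rw [h] <;> unfold chi
  · rw [if_neg]
    rintro ⟨c, hcc⟩
    have hmem : ((colS A i).orderEmbOfFin (card_colS A hA i)) c ∈ colS A i :=
      Finset.orderEmbOfFin_mem _ _ _
    have hval : (((colS A i).orderEmbOfFin (card_colS A hA i)) c) = j := by
      unfold asmTri at hcc
      apply Fin.ext
      omega
    rw [hval] at hmem
    unfold colS at hmem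
    simp only [mem_filter, mem_univ, true_and] at hmem
    omega
  · rw [if_pos]
    have hjS : j ∈ colS A i := by
      unfold colS
      simp only [mem_filter, mem_univ, true_and]
      exact h
    have : j ∈ Set.range ((colS A i).orderEmbOfFin (card_colS A hA i)) := by
      rw [Finset.range_orderEmbOfFin]; exact hjS
    obtain ⟨c, hc'⟩ := this
    refine ⟨c, ?_⟩
    unfold asmTri
    rw [hc']

lemma triMat_asmTri (A : Matrix (Fin n) (Fin n) ℤ) (hA : IsASM A) :
    triMat (asmTri A hA) = A := by
  funext i j
  have key : pSum (fun i' => A i' j) (i.1 + 1) = pSum (fun i' => A i' j) i.1 + A i j := by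
    have := psum_succ (fun i' => A i' j) i.1 i.isLt
    rw [this]
  by_cases h : 1 ≤ i.1
  · rw [triMat_pos _ i h, chi_asmTri A hA i j, chi_asmTri A hA _ j]
    show pSum (fun i' => A i' j) (i.1 + 1) - pSum (fun i' => A i' j) (i.1 - 1 + 1) = A i j
    rw [show i.1 - 1 + 1 = i.1 from by omega, key]
    ring
  · rw [triMat_zero _ i (by omega), chi_asmTri A hA i j, key,
      show i.1 = 0 from by omega, pSum_zero]
    ring

lemma colS_triMat (a : (i : Fin n) → Fin (i.1 + 1) → ℤ) (i : Fin n) :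
    colS (triMat a) i = univ.filter (fun j : Fin n => ∃ c, a i c = (j : ℤ) + 1) := by
  unfold colS
  ext j
  simp only [mem_filter, mem_univ, true_and]
  rw [colP_succ a j i.1 i.isLt]
  unfold chi
  by_cases hch : ∃ c, a i c = (j : ℤ) + 1
  · rw [if_pos hch]
    simp [hch]
  · rw [if_neg hch]
    simp [hch]

lemma asmTri_triMat (a : (i : Fin n) → Fin (i.1 + 1) → ℤ) (ht : IsMonotoneTriangle a)
    (hb : HasBottomRow a fun j => (j : ℤ) + 1) (hA : IsASM (triMat a)) :
    asmTri (triMat a) hA = a := by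
  funext i c
  have hbd := fun c => tri_bounds a ht hb i c
  have hn : 0 < n := i.pos
  have hf : (fun c : Fin (i.1 + 1) =>
      (⟨(a i c).toNat - 1, by have := hbd c; omega⟩ : Fin n)) =
      ⇑((colS (triMat a) i).orderEmbOfFin (card_colS _ hA i)) := by
    apply Finset.orderEmbOfFin_unique
    · intro x
      rw [colS_triMat a i]
      simp only [mem_filter, mem_univ, true_and]
      refine ⟨x, ?_⟩
      show a i x = (((a i x).toNat - 1 : ℕ) : ℤ) + 1
      have := hbd x
      omega
    · intro x y hxy
      show (a i x).toNat - 1 < (a i y).toNat - 1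
      have hlt := row_strictMono a ht i hxy
      have bx := hbd x
      have by' := hbd y
      omega
  unfold asmTri
  rw [← congrFun hf c]
  show (((a i c).toNat - 1 : ℕ) : ℤ) + 1 = a i c
  have := hbd c
  omega

end Inv


/-- Monotone triangles with bottom row `(1, 2, …, n)` are equinumerous with `n × n`
alternating sign matrices. -/
theorem monotone_triangles_eq_asm (n : ℕ) (hn : 1 ≤ n) :
    mtCount n (fun j => (j : ℤ) + 1) =
      Nat.card {A : Matrix (Fin n) (Fin n) ℤ // IsASM A} := by
  unfold mtCount
  apply Nat.card_congr
  refine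
    { toFun := fun x => ⟨triMat x.1, triMat_isASM x.1 x.2.1 x.2.2⟩
      invFun := fun y => ⟨asmTri y.1 y.2, asmTri_isMT y.1 y.2, asmTri_bottom y.1 y.2⟩
      left_inv := ?_
      right_inv := ?_ }
  · rintro ⟨a, ht, hb⟩
    exact Subtype.ext (asmTri_triMat a ht hb (triMat_isASM a ht hb))
  · rintro ⟨A, hA⟩
    exact Subtype.ext (triMat_asmTri A hA)
end

section
/- For every n ≥ 1 and all integers k_1 < k_2 < … < k_n, the number of monotone triangles (a_{i,j})_{1 ≤ j ≤ i ≤ n} with bottom row (k_1, …, k_n) that are in addition strictly increasing in southeast direction (i.e., a_{i−1,j} < a_{i,j+1} for all 1 ≤ j < i ≤ n) equals ∏_{1 ≤ i < j ≤ n} (k_j − k_i)/(j − i). -/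
open MvPolynomial Finset

/-- Strict increase in southeast direction: `a_{i-1,j} < a_{i,j+1}` for `1 ≤ j < i ≤ n`. -/
def IsSEStrict {n : ℕ} (a : (i : Fin n) → Fin (i.1 + 1) → ℤ) : Prop :=
  ∀ (r c : ℕ) (hr : r < n) (h1 : 1 ≤ r) (hc : c < r),
    a ⟨r - 1, by omega⟩ ⟨c, by show c < r - 1 + 1; omega⟩ <
      a ⟨r, hr⟩ ⟨c + 1, by show c + 1 < r + 1; omega⟩

/-- All pairs `(p, q)` with `p < q`. -/
def pairs (n : ℕ) : Finset (Fin n × Fin n) :=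
  Finset.univ.filter fun p => p.1 < p.2


noncomputable def FF (j : ℕ) (y : ℚ) : ℚ := ∏ t ∈ Finset.range j, (y - t)

lemma FF_succ_diff (j : ℕ) (y : ℚ) :
    FF (j + 1) (y + 1) - FF (j + 1) y = ((j : ℚ) + 1) * FF j y := by
  have h1 : FF (j + 1) (y + 1) = (y + 1) * FF j y := by
    rw [FF, Finset.prod_range_succ']
    have hc : ∀ t ∈ Finset.range j, (y + 1 - (((t : ℕ) + 1 : ℕ) : ℚ)) = y - t := by
      intro t _; push_cast; ring
    rw [Finset.prod_congr rfl hc, FF]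
    push_cast; ring
  have h2 : FF (j + 1) y = (y - j) * FF j y := by
    rw [FF, Finset.prod_range_succ, mul_comm]; rfl
  rw [h1, h2]; ring

lemma FF_telescope (j : ℕ) (d : ℕ) (a : ℤ) :
    ((j : ℚ) + 1) * ∑ y ∈ Finset.Icc a (a + d - 1), FF j (y : ℚ) =
      FF (j + 1) ((a : ℚ) + d) - FF (j + 1) (a : ℚ) := by
  induction d with
  | zero => simp
  | succ d ih =>
      have hIcc : Finset.Icc a (a + (d + 1 : ℕ) - 1) =
          insert (a + d) (Finset.Icc a (a + (d : ℕ) - 1)) := by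
        ext y
        simp only [Finset.mem_Icc, Finset.mem_insert]
        omega
      rw [hIcc, Finset.sum_insert (by simp [Finset.mem_Icc])]
      have hdiff := FF_succ_diff j ((a : ℚ) + d)
      have h3 : (a : ℚ) + ((d : ℚ) + 1) = (a : ℚ) + d + 1 := by ring
      push_cast
      rw [h3]
      push_cast at ih
      linarith [ih, hdiff]

noncomputable def ffPoly (j : ℕ) : Polynomial ℚ :=
  ∏ t ∈ Finset.range j, (Polynomial.X - Polynomial.C (t : ℚ))

lemma ffPoly_monic (j : ℕ) : (ffPoly j).Monic :=
  Polynomial.monic_prod_of_monic _ _ fun _ _ => Polynomial.monic_X_sub_C _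

lemma ffPoly_natDegree (j : ℕ) : (ffPoly j).natDegree = j := by
  rw [ffPoly, Polynomial.natDegree_prod_of_monic _ _ fun t _ => Polynomial.monic_X_sub_C _]
  simp only [Polynomial.natDegree_X_sub_C]
  simp

lemma ffPoly_eval (j : ℕ) (y : ℚ) : (ffPoly j).eval y = FF j y := by
  simp [ffPoly, FF, Polynomial.eval_prod]

lemma det_FF (m : ℕ) (x : Fin m → ℚ) :
    (Matrix.of fun i j : Fin m => FF j (x i)).det =
      ∏ i : Fin m, ∏ j ∈ Finset.Ioi i, (x j - x i) := by
  rw [← Matrix.det_vandermonde]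
  rw [Matrix.det_eval_matrixOfPolynomials_eq_det_vandermonde x (fun j => ffPoly j)
    (fun j => ffPoly_natDegree j) (fun j => ffPoly_monic j)]
  congr 1
  ext i j
  simp [ffPoly_eval]

lemma det_diff_step (n : ℕ) (x : Fin (n+1) → ℚ) :
    (Matrix.of fun i j : Fin n => FF ((j : ℕ) + 1) (x i.succ) - FF ((j : ℕ) + 1) (x i.castSucc)).det
      = (Matrix.of fun i j : Fin (n+1) => FF j (x i)).det := by
  set N : Matrix (Fin (n+1)) (Fin (n+1)) ℚ := Matrix.of fun i j => FF j (x i) with hN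
  set D : Matrix (Fin (n+1)) (Fin (n+1)) ℚ :=
    Matrix.of fun i j =>
      Fin.cases (motive := fun _ => ℚ) (FF j (x 0))
        (fun i' => FF j (x i'.succ) - FF j (x i'.castSucc)) i with hD
  have hdet : N.det = D.det := by
    apply Matrix.det_eq_of_forall_row_eq_smul_add_pred (fun _ => (1 : ℚ))
    · intro j; simp [N, D]
    · intro i j; simp [N, D]
  rw [hdet, Matrix.det_succ_column_zero]
  rw [Finset.sum_eq_single (0 : Fin (n+1))]
  · have h00 : D 0 0 = 1 := by simp [D, FF]
    rw [h00]
    simp only [Fin.val_zero, pow_zero, one_mul, mul_one]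
    rfl
  · intro b _ hb
    obtain ⟨i', rfl⟩ := Fin.eq_succ_of_ne_zero hb
    have : D i'.succ 0 = 0 := by simp [D, FF]
    rw [this]; ring
  · intro h; exact absurd (Finset.mem_univ _) h

lemma key_sum (n : ℕ) (x : Fin (n+1) → ℤ) (hx : ∀ i : Fin n, x i.castSucc ≤ x i.succ) :
    ∑ ν ∈ Fintype.piFinset (fun i : Fin n => Finset.Icc (x i.castSucc) (x i.succ - 1)),
      ∏ i : Fin n, ∏ j ∈ Finset.Ioi i, ((ν j : ℚ) - (ν i : ℚ))
    = (∏ i : Fin (n+1), ∏ j ∈ Finset.Ioi i, ((x j : ℚ) - (x i : ℚ))) / (Nat.factorial n) := by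
  classical
  set A : (i : Fin n) → Finset ℤ :=
    fun i => Finset.Icc (x i.castSucc) (x i.succ - 1) with hA
  -- each summand is a determinant
  have hsummand : ∀ ν : Fin n → ℤ,
      ∏ i : Fin n, ∏ j ∈ Finset.Ioi i, ((ν j : ℚ) - (ν i : ℚ)) =
        Matrix.det (Matrix.of fun i j : Fin n => FF j ((ν i : ℚ))) := by
    intro ν; rw [det_FF]
  simp only [hsummand]
  -- swap sum and determinant using multilinearity
  have hswap :
      ∑ ν ∈ Fintype.piFinset A, Matrix.det (Matrix.of fun i j : Fin n => FF j ((ν i : ℚ)))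
        = Matrix.det (Matrix.of fun i j : Fin n => ∑ y ∈ A i, FF j ((y : ℤ) : ℚ)) := by
    have hml := (Matrix.detRowAlternating (R := ℚ) (n := Fin n)).toMultilinearMap.map_sum_finset
      (g := fun (i : Fin n) (y : ℤ) => (fun j : Fin n => FF j ((y : ℚ)))) (A := A)
    have h1 : ∀ ν : Fin n → ℤ, (Matrix.of fun i j : Fin n => FF j ((ν i : ℚ))).det
        = Matrix.detRowAlternating (fun i j : Fin n => FF j ((ν i : ℚ))) := fun _ => rfl
    simp only [h1]
    simp only [← AlternatingMap.coe_multilinearMap] at *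
    rw [← hml]
    show Matrix.detRowAlternating _ = Matrix.detRowAlternating _
    congr 1
    funext i
    rw [Finset.sum_fn]
    rfl
  rw [hswap]
  -- evaluate the entries by telescoping
  have hentry : ∀ (i : Fin n) (j : Fin n),
      ∑ y ∈ A i, FF (j : ℕ) ((y : ℤ) : ℚ) =
        (1 / ((j : ℚ) + 1)) *
          (FF ((j : ℕ) + 1) ((x i.succ : ℚ)) - FF ((j : ℕ) + 1) ((x i.castSucc : ℚ))) := by
    intro i j
    have hd : x i.castSucc + ((x i.succ - x i.castSucc).toNat : ℤ) = x i.succ := by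
      have := hx i; omega
    have ht := FF_telescope (j : ℕ) (x i.succ - x i.castSucc).toNat (x i.castSucc)
    have hIcc : Finset.Icc (x i.castSucc) (x i.castSucc + ((x i.succ - x i.castSucc).toNat : ℤ) - 1)
        = A i := by rw [hd]
    rw [hIcc] at ht
    have hcast : ((x i.castSucc : ℤ) : ℚ) + (((x i.succ - x i.castSucc).toNat : ℕ) : ℚ)
        = ((x i.succ : ℤ) : ℚ) := by
      exact_mod_cast congrArg (fun z : ℤ => (z : ℚ)) hd
    rw [hcast] at ht
    have hj : ((j : ℚ) + 1) ≠ 0 := by positivity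
    field_simp
    linarith [ht]
  have hM : (Matrix.of fun i j : Fin n => ∑ y ∈ A i, FF j ((y : ℤ) : ℚ)) =
      (Matrix.of fun i j : Fin n => (1 / ((j : ℚ) + 1)) *
        (FF ((j : ℕ) + 1) ((x i.succ : ℚ)) - FF ((j : ℕ) + 1) ((x i.castSucc : ℚ)))) := by
    ext i j; exact hentry i j
  rw [hM]
  have hmr := Matrix.det_mul_row (fun j : Fin n => 1 / ((j : ℚ) + 1)) (Matrix.of fun i j : Fin n =>
    FF ((j : ℕ) + 1) ((x i.succ : ℚ)) - FF ((j : ℕ) + 1) ((x i.castSucc : ℚ)))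
  simp only [Matrix.of_apply] at hmr
  rw [hmr]
  have hprod : ∏ j : Fin n, ((j : ℚ) + 1) = ((Nat.factorial n) : ℚ) := by
    have h1 := Fin.prod_univ_eq_prod_range (fun j : ℕ => ((j : ℚ) + 1)) n
    have h2 := Finset.prod_range_add_one_eq_factorial n
    rw [h1, ← h2]
    push_cast
    rfl
  have hfac : ∏ j : Fin n, (1 / ((j : ℚ) + 1)) = 1 / ((Nat.factorial n) : ℚ) := by
    rw [Finset.prod_div_distrib, Finset.prod_const_one, hprod]
  rw [hfac]
  have hdd : (Matrix.of fun i j : Fin n =>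
      FF ((j : ℕ) + 1) ((x i.succ : ℚ)) - FF ((j : ℕ) + 1) ((x i.castSucc : ℚ))).det =
      ∏ i : Fin (n+1), ∏ j ∈ Finset.Ioi i, ((x j : ℚ) - (x i : ℚ)) := by
    have h1 := det_diff_step n (fun i => ((x i : ℤ) : ℚ))
    have h2 := det_FF (n+1) (fun i => ((x i : ℤ) : ℚ))
    exact h1.trans h2
  rw [one_div_mul_eq_div]
  congr 1

-- auxiliary definitions
abbrev Tri (n : ℕ) := (i : Fin n) → Fin (i.1 + 1) → ℤ

def TriSet (n : ℕ) (k : Fin n → ℤ) :=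
  {a : Tri n // IsMonotoneTriangle a ∧ IsSEStrict a ∧ HasBottomRow a k}

noncomputable def botA (n : ℕ) (k : Fin (n+1) → ℤ) : Fin n → Finset ℤ :=
  fun i => Finset.Icc (k i.castSucc) (k i.succ - 1)

def extend (n : ℕ) (k : Fin (n+1) → ℤ) (b : Tri n) : Tri (n+1) := fun i j =>
  if h : i.1 < n then b ⟨i.1, h⟩ ⟨j.1, j.2⟩
  else k ⟨j.1, by have := j.2; have := i.2; omega⟩

lemma extend_props (n : ℕ) (k : Fin (n+1) → ℤ) (ν : Fin n → ℤ)
    (hν : ν ∈ Fintype.piFinset (botA n k)) (b : Tri n)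
    (hb1 : IsMonotoneTriangle b) (hb2 : IsSEStrict b) (hb3 : HasBottomRow b ν) :
    IsMonotoneTriangle (extend n k b) ∧ IsSEStrict (extend n k b) ∧
      HasBottomRow (extend n k b) k := by
  have hmem : ∀ i : Fin n, k i.castSucc ≤ ν i ∧ ν i ≤ k i.succ - 1 := by
    intro i
    have := Fintype.mem_piFinset.mp hν i
    rw [botA, Finset.mem_Icc] at this
    exact this
  refine ⟨?_, ?_, ?_⟩
  · intro r c hr h1 hc
    by_cases hrn : r < n
    · have hr1 : r - 1 < n := by omega
      simp only [extend, dif_pos hrn, dif_pos hr1]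
      exact hb1 r c hrn h1 hc
    · have hreq : r = n := by omega
      subst hreq
      have hr1 : r - 1 < r := by omega
      simp only [extend]
      rw [dif_neg (by omega : ¬ r < r), dif_pos (by omega : r - 1 < r),
        dif_neg (by omega : ¬ r < r)]
      have hbb : b ⟨r - 1, by omega⟩ ⟨c, by show c < r - 1 + 1; omega⟩ = ν ⟨c, hc⟩ := hb3 ⟨c, hc⟩
      have hm := hmem ⟨c, hc⟩
      have e1 : k (Fin.castSucc ⟨c, hc⟩) = k ⟨c, by omega⟩ := rfl
      have e2 : k (Fin.succ ⟨c, hc⟩) = k ⟨c + 1, by omega⟩ := rfl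
      rw [e1, e2] at hm
      rw [hbb]
      refine ⟨hm.1, by omega, by omega⟩
  · intro r c hr h1 hc
    by_cases hrn : r < n
    · have hr1 : r - 1 < n := by omega
      simp only [extend, dif_pos hrn, dif_pos hr1]
      exact hb2 r c hrn h1 hc
    · have hreq : r = n := by omega
      subst hreq
      simp only [extend]
      rw [dif_pos (by omega : r - 1 < r), dif_neg (by omega : ¬ r < r)]
      have hbb : b ⟨r - 1, by omega⟩ ⟨c, by show c < r - 1 + 1; omega⟩ = ν ⟨c, hc⟩ := hb3 ⟨c, hc⟩
      have hm := hmem ⟨c, hc⟩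
      have e2 : k (Fin.succ ⟨c, hc⟩) = k ⟨c + 1, by omega⟩ := rfl
      rw [e2] at hm
      rw [hbb]
      omega
  · intro j
    simp only [extend]
    rw [dif_neg (by omega : ¬ (n + 1 - 1) < n)]

def shrink (n : ℕ) (a : Tri (n+1)) : Tri n := fun i j =>
  a ⟨i.1, by have := i.2; omega⟩ ⟨j.1, j.2⟩

def lastRow (n : ℕ) (a : Tri (n+1)) : Fin n → ℤ := fun j =>
  a ⟨n - 1, by omega⟩ ⟨j.1, by have := j.2; show j.1 < n - 1 + 1; omega⟩

def psi (n : ℕ) (k : Fin (n+1) → ℤ) :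
    (Σ ν : {f : Fin n → ℤ // f ∈ Fintype.piFinset (botA n k)}, TriSet n ν.1) →
      TriSet (n+1) k :=
  fun x => ⟨extend n k x.2.1,
    extend_props n k x.1.1 x.1.2 x.2.1 x.2.2.1 x.2.2.2.1 x.2.2.2.2⟩

lemma lastRow_extend (n : ℕ) (k : Fin (n+1) → ℤ) (b : Tri n) (ν : Fin n → ℤ)
    (hb3 : HasBottomRow b ν) : lastRow n (extend n k b) = ν := by
  funext j
  have hj := j.2
  have hn1' : n - 1 < n := by omega
  have hj1 : j.1 < n - 1 + 1 := by omega
  have h1 : lastRow n (extend n k b) j = b ⟨n - 1, hn1'⟩ ⟨j.1, hj1⟩ := dif_pos hn1'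
  rw [h1]
  exact hb3 j

lemma shrink_extend (n : ℕ) (k : Fin (n+1) → ℤ) (b : Tri n) :
    shrink n (extend n k b) = b := by
  funext i j
  exact dif_pos i.2

lemma psi_bijective (n : ℕ) (k : Fin (n+1) → ℤ) : Function.Bijective (psi n k) := by
  constructor
  · rintro ⟨⟨ν, hν⟩, b, hb⟩ ⟨⟨ν', hν'⟩, b', hb'⟩ h
    have he : extend n k b = extend n k b' := congrArg Subtype.val h
    have hvv : ν = ν' := by
      rw [← lastRow_extend n k b ν hb.2.2, ← lastRow_extend n k b' ν' hb'.2.2, he]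
    subst hvv
    have hbb : b = b' := by
      rw [← shrink_extend n k b, ← shrink_extend n k b', he]
    subst hbb
    rfl
  · rintro ⟨a, ha1, ha2, ha3⟩
    refine ⟨⟨⟨lastRow n a, ?_⟩, ⟨shrink n a, ?_, ?_, ?_⟩⟩, ?_⟩
    · refine Fintype.mem_piFinset.mpr fun i => ?_
      rw [botA, Finset.mem_Icc]
      have hi := i.2
      have hi1 : i.1 < n + 1 := by omega
      have hi2 : i.1 + 1 < n + 1 := by omega
      have hlow := (ha1 n i.1 (by omega) (by omega) i.2).1
      have hhigh := ha2 n i.1 (by omega) (by omega) i.2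
      exact ⟨le_trans (le_of_eq (ha3 ⟨i.1, hi1⟩).symm) hlow,
        Int.le_sub_one_of_lt (lt_of_lt_of_eq hhigh (ha3 ⟨i.1 + 1, hi2⟩))⟩
    · intro r c hr h1 hc
      exact ha1 r c (by omega) h1 hc
    · intro r c hr h1 hc
      exact ha2 r c (by omega) h1 hc
    · intro j
      rfl
    · apply Subtype.ext
      funext i j
      rcases i with ⟨iv, hiv⟩
      by_cases hin : iv < n
      · exact dif_pos hin
      · have hivn : iv = n := by omega
        subst hivn
        have hj : j.1 < iv + 1 := j.2
        exact (dif_neg hin).trans (ha3 ⟨j.1, hj⟩).symm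

lemma triSet_zero_card (k : Fin 0 → ℤ) : Nat.card (TriSet 0 k) = 1 := by
  have hsub : Subsingleton (TriSet 0 k) :=
    ⟨fun a b => Subtype.ext (funext fun i => i.elim0)⟩
  have hne : Nonempty (TriSet 0 k) :=
    ⟨⟨fun i => i.elim0, fun r c hr => absurd hr (Nat.not_lt_zero r),
      fun r c hr => absurd hr (Nat.not_lt_zero r), fun j => j.elim0⟩⟩
  rw [Nat.card_eq_one_iff_unique]
  exact ⟨hsub, hne⟩

lemma finite_triSet : ∀ (n : ℕ) (k : Fin n → ℤ), Finite (TriSet n k) := by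
  intro n
  induction n with
  | zero =>
      intro k
      have hsub : Subsingleton (TriSet 0 k) :=
        ⟨fun a b => Subtype.ext (funext fun i => i.elim0)⟩
      exact @Finite.of_subsingleton _ hsub
  | succ n ih =>
      intro k
      haveI : ∀ ν : {f : Fin n → ℤ // f ∈ Fintype.piFinset (botA n k)},
          Finite (TriSet n ν.1) := fun ν => ih ν.1
      exact Finite.of_surjective (psi n k) (psi_bijective n k).2

lemma nat_card_sigma {ι : Type*} [Fintype ι] (β : ι → Type*) [∀ i, Finite (β i)] :
    Nat.card (Σ i, β i) = ∑ i, Nat.card (β i) := by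
  letI : ∀ i, Fintype (β i) := fun i => Fintype.ofFinite _
  simp [Nat.card_eq_fintype_card, Fintype.card_sigma]

lemma card_rec (n : ℕ) (k : Fin (n+1) → ℤ) :
    Nat.card (TriSet (n+1) k) =
      ∑ ν ∈ Fintype.piFinset (botA n k), Nat.card (TriSet n ν) := by
  classical
  haveI : ∀ ν : {f : Fin n → ℤ // f ∈ Fintype.piFinset (botA n k)},
      Finite (TriSet n ν.1) := fun ν => finite_triSet n ν.1
  rw [← Nat.card_eq_of_bijective (psi n k) (psi_bijective n k)]
  rw [nat_card_sigma]
  exact Finset.sum_coe_sort (Fintype.piFinset (botA n k)) (fun f => Nat.card (TriSet n f))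

lemma count_formula : ∀ (n : ℕ) (k : Fin n → ℤ), StrictMono k →
    ((Nat.card (TriSet n k) : ℕ) : ℚ) =
      (∏ i : Fin n, ∏ j ∈ Finset.Ioi i, ((k j : ℚ) - (k i : ℚ))) /
        (∏ i : Fin n, ∏ j ∈ Finset.Ioi i, ((j.1 : ℚ) - (i.1 : ℚ))) := by
  intro n
  induction n with
  | zero => intro k _; rw [triSet_zero_card]; simp
  | succ n ih =>
    intro k hk
    have hfac0 : ((Nat.factorial n : ℕ) : ℚ) ≠ 0 := by positivity
    have hDrec : (∏ i : Fin (n+1), ∏ j ∈ Finset.Ioi i, ((j.1 : ℚ) - (i.1 : ℚ)))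
        = (Nat.factorial n : ℚ) *
          ∏ i : Fin n, ∏ j ∈ Finset.Ioi i, ((j.1 : ℚ) - (i.1 : ℚ)) := by
      have hx : ∀ i : Fin n,
          (((Fin.castSucc i).1 : ℤ)) ≤ (((Fin.succ i).1 : ℤ)) := by
        intro i
        simp [Fin.coe_castSucc, Fin.val_succ]
      have hks := key_sum n (fun i => (i.1 : ℤ)) hx
      have hsing : (Fintype.piFinset fun i : Fin n =>
          Finset.Icc (((Fin.castSucc i).1 : ℤ)) (((Fin.succ i).1 : ℤ) - 1))
          = {fun i : Fin n => (i.1 : ℤ)} := by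
        rw [← Fintype.piFinset_singleton]
        congr 1
        funext i
        have h1 : ((Fin.succ i).1 : ℤ) - 1 = ((Fin.castSucc i).1 : ℤ) := by
          simp [Fin.coe_castSucc, Fin.val_succ]
        rw [h1, Finset.Icc_self]
        simp [Fin.coe_castSucc]
      rw [hsing, Finset.sum_singleton] at hks
      push_cast at hks
      rw [eq_div_iff hfac0] at hks
      push_cast
      linarith [hks]
    have hsm : ∀ ν ∈ Fintype.piFinset (botA n k), StrictMono ν := by
      intro ν hν
      have hmem : ∀ i : Fin n, k i.castSucc ≤ ν i ∧ ν i ≤ k i.succ - 1 := by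
        intro i
        have := Fintype.mem_piFinset.mp hν i
        rwa [botA, Finset.mem_Icc] at this
      intro i j hij
      have h1 := (hmem i).2
      have h2 := (hmem j).1
      have hij' : i.1 < j.1 := hij
      have hle : i.succ ≤ j.castSucc := by
        rw [Fin.le_def]
        simp only [Fin.val_succ, Fin.coe_castSucc]
        omega
      have h3 : k i.succ ≤ k j.castSucc := hk.monotone hle
      omega
    rw [card_rec n k]
    push_cast
    rw [Finset.sum_congr rfl (fun ν hν => ih ν (hsm ν hν))]
    rw [← Finset.sum_div]
    have hks := key_sum n k (fun i => (hk (Fin.castSucc_lt_succ (i := i))).le)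
    rw [show Fintype.piFinset (botA n k)
        = Fintype.piFinset (fun i : Fin n => Finset.Icc (k i.castSucc) (k i.succ - 1))
      from rfl]
    rw [hks, hDrec, div_div]

/-- The number of monotone triangles with bottom row `k₁ < … < k_n` which are strictly
increasing in southeast direction is `∏_{1 ≤ i < j ≤ n} (k_j - k_i)/(j - i)`. -/
theorem strict_monotone_triangle_count (n : ℕ) (hn : 1 ≤ n) (k : Fin n → ℤ)
    (hk : StrictMono k) :
    ((Nat.card {a : (i : Fin n) → Fin (i.1 + 1) → ℤ //
        IsMonotoneTriangle a ∧ IsSEStrict a ∧ HasBottomRow a k} : ℕ) : ℚ) =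
      ∏ p ∈ pairs n, (((k p.2 : ℚ) - (k p.1 : ℚ)) / (((p.2 : ℕ) : ℚ) - ((p.1 : ℕ) : ℚ))) := by
  have h1 := count_formula n k hk
  have h2 : ∏ p ∈ pairs n,
      (((k p.2 : ℚ) - (k p.1 : ℚ)) / (((p.2 : ℕ) : ℚ) - ((p.1 : ℕ) : ℚ)))
      = ∏ i : Fin n, ∏ j ∈ Finset.Ioi i,
          (((k j : ℚ) - (k i : ℚ)) / ((j.1 : ℚ) - (i.1 : ℚ))) := by
    rw [pairs, Finset.prod_filter, ← Finset.univ_product_univ, Finset.prod_product]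
    refine Finset.prod_congr rfl fun i _ => ?_
    have hIoi : Finset.Ioi i = Finset.univ.filter (fun j => i < j) := by
      ext j; simp
    rw [hIoi, ← Finset.prod_filter]
  rw [h2]
  simp only [Finset.prod_div_distrib]
  exact h1
end

section
/- Let G(k_1, …, k_n) be a polynomial over ℂ and fix i with 1 ≤ i ≤ n − 1. Then the total degree of T_{k_i,k_{i+1}} G in the two variables (k_i, k_{i+1}) equals the total degree of T'_{k_i,k_{i+1}} G in (k_i, k_{i+1}); in particular, T_{k_i,k_{i+1}} G = 0 if and only if T'_{k_i,k_{i+1}} G = 0. -/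
open MvPolynomial Finset

/-- The shift of a polynomial by an integer vector `a`:
`(shiftPolyC a p)(x₁,…,xₙ) = p(x₁ + a₁, …, xₙ + aₙ)`. -/
noncomputable def shiftPolyC {n : ℕ} (a : Fin n → ℤ) (p : MvPolynomial (Fin n) ℂ) :
    MvPolynomial (Fin n) ℂ :=
  aeval (fun j => X j + C ((a j : ℂ))) p

/-- A Laurent polynomial `Q` in the commuting shift operators `E₁,…,Eₙ` (an element of the
group algebra `ℂ[ℤⁿ]`, the exponent vector recording the shift) acts on polynomials. -/
noncomputable def opApplyC {n : ℕ} (Q : AddMonoidAlgebra ℂ (Fin n → ℤ))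
    (p : MvPolynomial (Fin n) ℂ) : MvPolynomial (Fin n) ℂ :=
  Q.coeff.sum fun a c => c • shiftPolyC a p

/-- The shift operator `E_{k_i}` as an element of the operator algebra. -/
noncomputable def EshC {n : ℕ} (i : Fin n) : AddMonoidAlgebra ℂ (Fin n → ℤ) :=
  AddMonoidAlgebra.single (Pi.single i 1) 1

/-- The inverse shift operator `E_{k_i}⁻¹`. -/
noncomputable def EshInvC {n : ℕ} (i : Fin n) : AddMonoidAlgebra ℂ (Fin n → ℤ) :=
  AddMonoidAlgebra.single (Pi.single i (-1)) 1

/-- The difference operator `Δ_{k_i} = E_{k_i} - id`. -/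
noncomputable def DltC {n : ℕ} (i : Fin n) : AddMonoidAlgebra ℂ (Fin n → ℤ) :=
  EshC i - 1

/-- `V_{k_i,k_j} = id + E_{k_i}⁻¹ Δ_{k_i} Δ_{k_j}`. -/
noncomputable def Vel {n : ℕ} (i j : Fin n) : AddMonoidAlgebra ℂ (Fin n → ℤ) :=
  1 + EshInvC i * DltC i * DltC j

/-- The operator `T_{k_i,k_j} = (id + E_{k_j} E_{k_i}⁻¹ S_{k_i,k_j}) ∘ V_{k_i,k_j} ∘
(V_{k_i,k_j} + V_{k_j,k_i})⁻¹` (the swap `S` is realized by `rename (Equiv.swap i j)`,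
and the inverse of `V + V` by `Function.invFun`, the operator being bijective). -/
noncomputable def Tbig {n : ℕ} (i j : Fin n) (G : MvPolynomial (Fin n) ℂ) :
    MvPolynomial (Fin n) ℂ :=
  let G2 := opApplyC (Vel i j) (Function.invFun (opApplyC (Vel i j + Vel j i)) G)
  G2 + opApplyC (EshC j * EshInvC i) (rename (Equiv.swap i j) G2)

/-- The operator `T'_{k_i,k_j} = (id + S_{k_i,k_j})(id + E_{k_j} Δ_{k_i})`. -/
noncomputable def Tsml {n : ℕ} (i j : Fin n) (G : MvPolynomial (Fin n) ℂ) :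
    MvPolynomial (Fin n) ℂ :=
  let H := opApplyC (1 + EshC j * DltC i) G
  H + rename (Equiv.swap i j) H

/-- The total degree of a polynomial in the two variables `k_i, k_j`. -/
noncomputable def degPair {n : ℕ} (i j : Fin n) (p : MvPolynomial (Fin n) ℂ) : ℕ :=
  p.support.sup fun m => m i + m j


noncomputable section
variable {n : ℕ}

lemma shiftPolyC_comp (a b : Fin n → ℤ) (p : MvPolynomial (Fin n) ℂ) :
    shiftPolyC a (shiftPolyC b p) = shiftPolyC (a + b) p := by
  simp only [shiftPolyC, aeval_eq_bind₁, bind₁_bind₁]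
  congr 1
  congr 1
  funext l
  simp only [bind₁_X_right, map_add, bind₁_C_right, Pi.add_apply]
  rw [Int.cast_add, map_add, add_assoc]

lemma shiftPolyC_zero (p : MvPolynomial (Fin n) ℂ) : shiftPolyC 0 p = p := by
  simp [shiftPolyC]

noncomputable def Phi (n : ℕ) : Multiplicative (Fin n → ℤ) →* Module.End ℂ (MvPolynomial (Fin n) ℂ) where
  toFun a := (aeval (fun j => X j + C (((Multiplicative.toAdd a) j : ℤ) : ℂ))).toLinearMap
  map_one' := by
    refine LinearMap.ext fun p => ?_
    simp only [toAdd_one, Pi.zero_apply, Int.cast_zero, map_zero, add_zero]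
    simpa [shiftPolyC] using shiftPolyC_zero p
  map_mul' a b := by
    refine LinearMap.ext fun p => ?_
    have := shiftPolyC_comp (Multiplicative.toAdd a) (Multiplicative.toAdd b) p
    simpa [shiftPolyC, Module.End.mul_apply] using this.symm

noncomputable def Lop (n : ℕ) :
    AddMonoidAlgebra ℂ (Fin n → ℤ) →ₐ[ℂ] Module.End ℂ (MvPolynomial (Fin n) ℂ) :=
  AddMonoidAlgebra.lift ℂ _ (Fin n → ℤ) (Phi n)

lemma opApplyC_eq (Q : AddMonoidAlgebra ℂ (Fin n → ℤ)) (p : MvPolynomial (Fin n) ℂ) :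
    opApplyC Q p = Lop n Q p := by
  rw [Lop, AddMonoidAlgebra.lift_apply]
  rw [opApplyC]
  classical
  rw [Finsupp.sum, Finsupp.sum, LinearMap.coe_sum, Finset.sum_apply]
  refine Finset.sum_congr rfl fun a _ => ?_
  simp [Phi, shiftPolyC]

lemma Lop_single (a : Fin n → ℤ) (c : ℂ) (p : MvPolynomial (Fin n) ℂ) :
    Lop n (AddMonoidAlgebra.single a c) p = c • shiftPolyC a p := by
  rw [← opApplyC_eq, opApplyC, AddMonoidAlgebra.coeff_single, Finsupp.sum_single_index]
  simp

noncomputable def eps (n : ℕ) : AddMonoidAlgebra ℂ (Fin n → ℤ) →ₐ[ℂ] ℂ :=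
  AddMonoidAlgebra.lift ℂ ℂ (Fin n → ℤ) 1

lemma eps_single (a : Fin n → ℤ) (c : ℂ) : eps n (AddMonoidAlgebra.single a c) = c := by
  rw [eps, AddMonoidAlgebra.lift_single]
  simp

lemma pow_expand (j : Fin n) (c : ℂ) (e : ℕ) :
    (X j + C c : MvPolynomial (Fin n) ℂ)^e
      = ∑ k ∈ range (e+1), monomial (Finsupp.single j k) (c^(e-k) * (e.choose k : ℂ)) := by
  rw [add_pow]
  refine Finset.sum_congr rfl fun k _ => ?_
  rw [X_pow_eq_monomial, ← C_pow, ← C_eq_coe_nat, C_apply, C_apply, monomial_mul, monomial_mul]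
  simp

lemma coeff_pow_shift {j : Fin n} {c : ℂ} {e : ℕ} {m : Fin n →₀ ℕ}
    (h : coeff m ((X j + C c : MvPolynomial (Fin n) ℂ)^e) ≠ 0) :
    ∃ k ≤ e, m = Finsupp.single j k ∧ (c = 0 → k = e) := by
  rw [pow_expand, coeff_sum] at h
  obtain ⟨k, hk, hne⟩ := Finset.exists_ne_zero_of_sum_ne_zero h
  rw [coeff_monomial] at hne
  split_ifs at hne with hm
  · simp only [Finset.mem_range] at hk
    refine ⟨k, by omega, hm.symm, fun hc => ?_⟩
    subst hc
    by_contra hke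
    have hek : e - k ≠ 0 := by omega
    simp [zero_pow hek] at hne
  · exact absurd rfl hne

lemma coeff_pow_top (j : Fin n) (c : ℂ) (e : ℕ) :
    coeff (Finsupp.single j e) ((X j + C c : MvPolynomial (Fin n) ℂ)^e) = 1 := by
  rw [pow_expand, coeff_sum]
  rw [Finset.sum_eq_single e]
  · simp
  · intro k hk hke
    rw [coeff_monomial, if_neg]
    intro hsingle
    exact hke (by simpa using congrArg (fun f => f j) hsingle)
  · intro h
    simp at h
variable {n : ℕ}

noncomputable def Pprod (b : Fin n → ℂ) (d : Fin n →₀ ℕ) : MvPolynomial (Fin n) ℂ :=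
  d.prod fun j e => (X j + C (b j))^e

lemma Pprod_zero (b : Fin n → ℂ) : Pprod b 0 = 1 := by
  simp [Pprod]

lemma Pprod_step (b : Fin n → ℂ) (j : Fin n) (e : ℕ) (d : Fin n →₀ ℕ) :
    Pprod b (Finsupp.single j e + d) = (X j + C (b j))^e * Pprod b d := by
  rw [Pprod, Finsupp.prod_add_index (fun _ _ => pow_zero _) (fun _ _ _ _ => pow_add _ _ _)]
  rw [Finsupp.prod_single_index (h := fun x e => (X x + C (b x))^e) (pow_zero _)]
  rfl

example (p q : MvPolynomial (Fin n) ℂ) (m : Fin n →₀ ℕ) :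
    coeff m (p * q) = ∑ x ∈ Finset.HasAntidiagonal.antidiagonal m, coeff x.1 p * coeff x.2 q := coeff_mul p q m

lemma Pprod_coeff_le (b : Fin n → ℂ) (d : Fin n →₀ ℕ) :
    ∀ m : Fin n →₀ ℕ, coeff m (Pprod b d) ≠ 0 →
      (∀ l, m l ≤ d l) ∧ (∀ l, b l = 0 → m l = d l) := by
  induction d using Finsupp.induction with
  | zero =>
    intro m hm
    rw [Pprod_zero, coeff_one] at hm
    split_ifs at hm with h
    · subst h; simp
    · exact absurd rfl hm
  | single_add j e d hj he ih =>
    intro m hm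
    rw [Pprod_step, coeff_mul] at hm
    obtain ⟨⟨m1, m2⟩, hmem, hne⟩ := Finset.exists_ne_zero_of_sum_ne_zero hm
    rw [Finset.HasAntidiagonal.mem_antidiagonal] at hmem
    have h1 : coeff m1 ((X j + C (b j) : MvPolynomial (Fin n) ℂ)^e) ≠ 0 := fun h => hne (by simp [h])
    have h2 : coeff m2 (Pprod b d) ≠ 0 := fun h => hne (by simp [h])
    obtain ⟨k, hk, hm1, hck⟩ := coeff_pow_shift h1
    obtain ⟨ih1, ih2⟩ := ih m2 h2
    subst hmem hm1
    constructor
    · intro l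
      have := ih1 l
      simp only [Finsupp.add_apply, Finsupp.single_apply]
      by_cases hl : j = l
      · subst hl; simpa [Finsupp.single_apply] using by omega
      · simpa [Finsupp.single_apply, hl] using this
    · intro l hbl
      have := ih2 l hbl
      simp only [Finsupp.add_apply, Finsupp.single_apply]
      by_cases hl : j = l
      · subst hl
        have : k = e := hck (by simpa using hbl)
        simp [this, ih2 j hbl]
      · simp [hl, this]

lemma Pprod_coeff_top (b : Fin n → ℂ) (d : Fin n →₀ ℕ) :
    coeff d (Pprod b d) = 1 := by
  induction d using Finsupp.induction with
  | zero => simp [Pprod_zero]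
  | single_add j e d hj he ih =>
    rw [Pprod_step, coeff_mul]
    rw [Finset.sum_eq_single (Finsupp.single j e, d)]
    · rw [coeff_pow_top, ih, one_mul]
    · rintro ⟨m1, m2⟩ hmem hne
      rw [Finset.HasAntidiagonal.mem_antidiagonal] at hmem
      by_contra hne0
      have h1 : coeff m1 ((X j + C (b j) : MvPolynomial (Fin n) ℂ)^e) ≠ 0 :=
        fun h => hne0 (by simp [h])
      have h2 : coeff m2 (Pprod b d) ≠ 0 := fun h => hne0 (by simp [h])
      obtain ⟨k, hk, hm1, -⟩ := coeff_pow_shift h1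
      obtain ⟨ih1, -⟩ := Pprod_coeff_le b d m2 h2
      subst hm1
      -- from hmem : single j k + m2 = single j e + d, with k ≤ e, m2 ≤ d pointwise
      have hpt : ∀ l, Finsupp.single j k l + m2 l = Finsupp.single j e l + d l := by
        intro l; rw [← Finsupp.add_apply, ← Finsupp.add_apply, hmem]
      have hptj := hpt j
      simp [Finsupp.single_apply] at hptj
      have h2j := ih1 j
      have hje : k = e := by omega
      have hm2 : m2 = d := by
        ext l
        have hptl := hpt l
        by_cases hl : j = l
        · subst hl
          simp [Finsupp.single_apply] at hptl
          omega
        · simpa [Finsupp.single_apply, hl] using hptl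
      exact hne (by rw [hje, hm2])
    · intro h
      simp at h


lemma shift_as_sum (a : Fin n → ℤ) (p : MvPolynomial (Fin n) ℂ) :
    shiftPolyC a p = ∑ d ∈ p.support, C (coeff d p) * Pprod (fun l => ((a l : ℤ) : ℂ)) d := by
  conv_lhs => rw [← support_sum_monomial_coeff p]
  rw [shiftPolyC, map_sum]
  refine Finset.sum_congr rfl fun d _ => ?_
  rw [aeval_monomial]
  rfl

lemma coeff_shift_support {a : Fin n → ℤ} {p : MvPolynomial (Fin n) ℂ} {m : Fin n →₀ ℕ}
    (h : coeff m (shiftPolyC a p) ≠ 0) :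
    ∃ d ∈ p.support, (∀ l, m l ≤ d l) ∧ (∀ l, a l = 0 → m l = d l) := by
  rw [shift_as_sum, coeff_sum] at h
  obtain ⟨d, hd, hne⟩ := Finset.exists_ne_zero_of_sum_ne_zero h
  rw [coeff_C_mul] at hne
  have hP : coeff m (Pprod (fun l => ((a l : ℤ) : ℂ)) d) ≠ 0 := fun h0 => hne (by simp [h0])
  obtain ⟨h1, h2⟩ := Pprod_coeff_le _ d m hP
  exact ⟨d, hd, h1, fun l hl => h2 l (by simp [hl])⟩

lemma coeff_shift_extremal' {a : Fin n → ℤ} {p : MvPolynomial (Fin n) ℂ} {m : Fin n →₀ ℕ}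
    (hmax : ∀ d ∈ p.support,
      ((∀ l, m l ≤ d l) ∧ (∀ l, a l = 0 → m l = d l)) → d = m) :
    coeff m (shiftPolyC a p) = coeff m p := by
  rw [shift_as_sum, coeff_sum]
  rw [Finset.sum_eq_single m]
  · rw [coeff_C_mul, Pprod_coeff_top, mul_one]
  · intro d hd hdm
    rw [coeff_C_mul]
    by_contra h0
    have hP : coeff m (Pprod (fun l => ((a l : ℤ) : ℂ)) d) ≠ 0 := fun h1 => h0 (by simp [h1])
    obtain ⟨h1, h2⟩ := Pprod_coeff_le _ d m hP
    exact hdm (hmax d hd ⟨h1, fun l hl => h2 l (by simp [hl])⟩)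
  · intro h
    rw [notMem_support_iff.mp h]
    simp

lemma coeff_shift_extremal {a : Fin n → ℤ} {p : MvPolynomial (Fin n) ℂ} {m : Fin n →₀ ℕ}
    (hmax : ∀ d ∈ p.support, (∀ l, m l ≤ d l) → d = m) :
    coeff m (shiftPolyC a p) = coeff m p :=
  coeff_shift_extremal' fun d hd hc => hmax d hd hc.1

lemma coeff_opApplyC (Q : AddMonoidAlgebra ℂ (Fin n → ℤ)) (p : MvPolynomial (Fin n) ℂ)
    (m : Fin n →₀ ℕ) :
    coeff m (opApplyC Q p) = ∑ a ∈ Q.coeff.support, Q.coeff a * coeff m (shiftPolyC a p) := by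
  rw [opApplyC, Finsupp.sum, coeff_sum]
  refine Finset.sum_congr rfl fun a _ => ?_
  rw [coeff_smul, smul_eq_mul]

lemma eps_apply (Q : AddMonoidAlgebra ℂ (Fin n → ℤ)) :
    eps n Q = ∑ a ∈ Q.coeff.support, Q.coeff a := by
  rw [eps, AddMonoidAlgebra.lift_apply]
  simp [Finsupp.sum]

lemma degPair_opApplyC_le (i j : Fin n) (Q : AddMonoidAlgebra ℂ (Fin n → ℤ))
    (p : MvPolynomial (Fin n) ℂ) :
    degPair i j (opApplyC Q p) ≤ degPair i j p := by
  refine Finset.sup_le fun m hm => ?_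
  have hc : coeff m (opApplyC Q p) ≠ 0 := mem_support_iff.mp hm
  rw [coeff_opApplyC] at hc
  obtain ⟨a, _, hne⟩ := Finset.exists_ne_zero_of_sum_ne_zero hc
  have hs : coeff m (shiftPolyC a p) ≠ 0 := fun h0 => hne (by simp [h0])
  obtain ⟨d, hd, h1, -⟩ := coeff_shift_support hs
  calc m i + m j ≤ d i + d j := by have := h1 i; have := h1 j; omega
  _ ≤ degPair i j p := Finset.le_sup (f := fun m => m i + m j) hd

lemma opApplyC_eps_ne (i j : Fin n) {Q : AddMonoidAlgebra ℂ (Fin n → ℤ)}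
    (hQ : eps n Q ≠ 0) {p : MvPolynomial (Fin n) ℂ} (hp : p ≠ 0) :
    opApplyC Q p ≠ 0 ∧ degPair i j (opApplyC Q p) = degPair i j p := by
  classical
  have hsupp : p.support.Nonempty := support_nonempty.mpr hp
  obtain ⟨m0, hm0, hm0eq⟩ := Finset.exists_mem_eq_sup p.support hsupp fun m => m i + m j
  set S := p.support.filter fun m => m i + m j = degPair i j p with hSdef
  have hS : S.Nonempty := ⟨m0, Finset.mem_filter.mpr ⟨hm0, hm0eq.symm⟩⟩
  obtain ⟨m, hmS, hmax0⟩ := Finset.exists_max_image S (fun m => ∑ l, m l) hS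
  obtain ⟨hm, hdeg⟩ := Finset.mem_filter.mp hmS
  have key : ∀ d ∈ p.support, (∀ l, m l ≤ d l) → d = m := by
    intro d hd hle
    have h1 : d i + d j ≤ degPair i j p := Finset.le_sup (f := fun m => m i + m j) hd
    have hdS : d ∈ S := Finset.mem_filter.mpr ⟨hd, by have := hle i; have := hle j; omega⟩
    have h3 := hmax0 d hdS
    have h4 : ∑ l, m l ≤ ∑ l, d l := Finset.sum_le_sum fun l _ => hle l
    have h5 := (Finset.sum_eq_sum_iff_of_le fun l _ => hle l).mp (le_antisymm h4 h3)
    exact Finsupp.ext fun l => (h5 l (Finset.mem_univ l)).symm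
  have hcoeff : coeff m (opApplyC Q p) = eps n Q * coeff m p := by
    rw [coeff_opApplyC, eps_apply, Finset.sum_mul]
    refine Finset.sum_congr rfl fun a _ => ?_
    rw [coeff_shift_extremal key]
  have hcne : coeff m (opApplyC Q p) ≠ 0 := by
    rw [hcoeff]
    exact mul_ne_zero hQ (mem_support_iff.mp hm)
  have hmem : m ∈ (opApplyC Q p).support := mem_support_iff.mpr hcne
  refine ⟨fun h0 => by simp [h0] at hcne, le_antisymm (degPair_opApplyC_le i j Q p) ?_⟩
  calc degPair i j p = m i + m j := hdeg.symm
  _ ≤ degPair i j (opApplyC Q p) := Finset.le_sup (f := fun m => m i + m j) hmem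

lemma opApplyC_injective (i j : Fin n) {Q : AddMonoidAlgebra ℂ (Fin n → ℤ)} (hQ : eps n Q ≠ 0)
    {p : MvPolynomial (Fin n) ℂ} (h : opApplyC Q p = 0) : p = 0 := by
  by_contra hp
  exact (opApplyC_eps_ne i j hQ hp).1 h

lemma opApplyC_mul (P Q : AddMonoidAlgebra ℂ (Fin n → ℤ)) (p : MvPolynomial (Fin n) ℂ) :
    opApplyC (P * Q) p = opApplyC P (opApplyC Q p) := by
  simp only [opApplyC_eq, map_mul, Module.End.mul_apply]

lemma opApplyC_add (P Q : AddMonoidAlgebra ℂ (Fin n → ℤ)) (p : MvPolynomial (Fin n) ℂ) :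
    opApplyC (P + Q) p = opApplyC P p + opApplyC Q p := by
  simp only [opApplyC_eq, map_add, LinearMap.add_apply]

lemma opApplyC_poly_add (Q : AddMonoidAlgebra ℂ (Fin n → ℤ)) (p q : MvPolynomial (Fin n) ℂ) :
    opApplyC Q (p + q) = opApplyC Q p + opApplyC Q q := by
  simp only [opApplyC_eq, map_add]

lemma opApplyC_poly_sub (Q : AddMonoidAlgebra ℂ (Fin n → ℤ)) (p q : MvPolynomial (Fin n) ℂ) :
    opApplyC Q (p - q) = opApplyC Q p - opApplyC Q q := by
  simp only [opApplyC_eq, map_sub]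

lemma opApplyC_poly_zero (Q : AddMonoidAlgebra ℂ (Fin n → ℤ)) :
    opApplyC Q (0 : MvPolynomial (Fin n) ℂ) = 0 := by
  simp only [opApplyC_eq, map_zero]

lemma opApplyC_one (p : MvPolynomial (Fin n) ℂ) :
    opApplyC (1 : AddMonoidAlgebra ℂ (Fin n → ℤ)) p = p := by
  simp only [opApplyC_eq, map_one, Module.End.one_apply]

lemma degPair_comm (i j : Fin n) (p : MvPolynomial (Fin n) ℂ) :
    degPair i j p = degPair j i p :=
  Finset.sup_congr rfl fun m _ => add_comm _ _

lemma degPair_zero (i j : Fin n) : degPair i j (0 : MvPolynomial (Fin n) ℂ) = 0 := by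
  simp [degPair]

lemma opApplyC_delta (j : Fin n) (p : MvPolynomial (Fin n) ℂ) :
    opApplyC (DltC j) p = shiftPolyC (Pi.single j 1) p - p := by
  rw [DltC, EshC]
  rw [opApplyC_eq, map_sub, map_one, LinearMap.sub_apply, Module.End.one_apply, ← opApplyC_eq]
  rw [opApplyC, AddMonoidAlgebra.coeff_single, Finsupp.sum_single_index (by simp), one_smul]

lemma coeff_delta_zero (i j : Fin n) (hij : i ≠ j) (p : MvPolynomial (Fin n) ℂ)
    {m : Fin n →₀ ℕ} (hm : degPair i j p ≤ m i + m j) :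
    coeff m (opApplyC (DltC j) p) = 0 := by
  rw [opApplyC_delta, coeff_sub]
  rw [coeff_shift_extremal' ?_, sub_self]
  rintro d hd ⟨h1, h2⟩
  have hdle : d i + d j ≤ degPair i j p := Finset.le_sup (f := fun m => m i + m j) hd
  have hmi : m i = d i := h2 i (Pi.single_eq_of_ne hij 1)
  have hmj : m j = d j := by have := h1 j; omega
  refine Finsupp.ext fun l => ?_
  by_cases hl : l = j
  · subst hl; exact hmj.symm
  · exact (h2 l (Pi.single_eq_of_ne hl 1)).symm

lemma delta_degPair (i j : Fin n) (hij : i ≠ j) (p : MvPolynomial (Fin n) ℂ) :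
    opApplyC (DltC j) p = 0 ∨ degPair i j (opApplyC (DltC j) p) < degPair i j p := by
  by_cases h0 : opApplyC (DltC j) p = 0
  · exact Or.inl h0
  right
  have hne : (opApplyC (DltC j) p).support.Nonempty := support_nonempty.mpr h0
  have hbound : ∀ m ∈ (opApplyC (DltC j) p).support, m i + m j < degPair i j p := by
    intro m hm
    by_contra hge
    exact mem_support_iff.mp hm (coeff_delta_zero i j hij p (by omega))
  obtain ⟨m0, hm0⟩ := hne
  have hpos : 0 < degPair i j p := lt_of_le_of_lt (Nat.zero_le _) (hbound m0 hm0)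
  exact (Finset.sup_lt_iff hpos).mpr hbound

lemma delta_degPair' (i j : Fin n) (hij : i ≠ j) (p : MvPolynomial (Fin n) ℂ) :
    opApplyC (DltC i) p = 0 ∨ degPair i j (opApplyC (DltC i) p) < degPair i j p := by
  have := delta_degPair j i hij.symm p
  rwa [degPair_comm j i, degPair_comm j i] at this

lemma W_decomp (i j : Fin n) :
    Vel i j + Vel j i
      = (1 + 1) + ((EshInvC i + EshInvC j) * DltC i) * DltC j := by
  rw [Vel, Vel]
  ring

lemma N_degPair (i j : Fin n) (hij : i ≠ j) (p : MvPolynomial (Fin n) ℂ) :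
    opApplyC (((EshInvC i + EshInvC j) * DltC i) * DltC j) p = 0 ∨
      degPair i j (opApplyC (((EshInvC i + EshInvC j) * DltC i) * DltC j) p) < degPair i j p := by
  rw [opApplyC_mul]
  rcases delta_degPair i j hij p with h | h
  · rw [h, opApplyC_poly_zero]; exact Or.inl rfl
  right
  calc degPair i j (opApplyC ((EshInvC i + EshInvC j) * DltC i) (opApplyC (DltC j) p))
      ≤ degPair i j (opApplyC (DltC j) p) := degPair_opApplyC_le i j _ _
  _ < degPair i j p := h

lemma W_surjective (i j : Fin n) (hij : i ≠ j) (G : MvPolynomial (Fin n) ℂ) :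
    ∃ p, opApplyC (Vel i j + Vel j i) p = G := by
  suffices h : ∀ k : ℕ, ∀ G : MvPolynomial (Fin n) ℂ, degPair i j G ≤ k →
      ∃ p, opApplyC (Vel i j + Vel j i) p = G from h (degPair i j G) G le_rfl
  intro k
  induction k with
  | zero =>
    intro G hG
    refine ⟨(2⁻¹ : ℂ) • G, ?_⟩
    have hdp : degPair i j ((2⁻¹ : ℂ) • G) ≤ 0 :=
      le_trans (Finset.sup_mono (MvPolynomial.support_smul)) hG
    have hN := N_degPair i j hij ((2⁻¹ : ℂ) • G)
    have hN0 : opApplyC (((EshInvC i + EshInvC j) * DltC i) * DltC j) ((2⁻¹ : ℂ) • G) = 0 := by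
      rcases hN with h | h
      · exact h
      · omega
    rw [W_decomp, opApplyC_add, hN0, add_zero, opApplyC_add, opApplyC_one]
    rw [← two_smul ℂ, smul_smul]
    norm_num
  | succ k ih =>
    intro G hG
    set p0 := (2⁻¹ : ℂ) • G with hp0
    have hWp0 : opApplyC (Vel i j + Vel j i) p0
        = G + opApplyC (((EshInvC i + EshInvC j) * DltC i) * DltC j) p0 := by
      rw [W_decomp, opApplyC_add, opApplyC_add, opApplyC_one]
      congr 1
      rw [hp0, ← two_smul ℂ, smul_smul]
      norm_num
    have hdp0 : degPair i j p0 ≤ degPair i j G :=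
      Finset.sup_mono (MvPolynomial.support_smul)
    rcases N_degPair i j hij p0 with h | h
    · exact ⟨p0, by rw [hWp0, h, add_zero]⟩
    · have hk : degPair i j (opApplyC (((EshInvC i + EshInvC j) * DltC i) * DltC j) p0) ≤ k := by
        omega
      obtain ⟨p1, hp1⟩ := ih _ hk
      refine ⟨p0 - p1, ?_⟩
      rw [opApplyC_poly_sub, hWp0, hp1]
      abel

lemma rename_shift (σ : Equiv.Perm (Fin n)) (a : Fin n → ℤ) (p : MvPolynomial (Fin n) ℂ) :
    rename σ (shiftPolyC a p) = shiftPolyC (a ∘ σ.symm) (rename σ p) := by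
  rw [shiftPolyC, shiftPolyC]
  rw [← AlgHom.comp_apply, comp_aeval, aeval_rename]
  congr 1
  congr 1
  funext l
  simp only [Function.comp_apply, map_add, rename_X, rename_C, Equiv.symm_apply_apply]

noncomputable def swapAddEquiv (σ : Equiv.Perm (Fin n)) : (Fin n → ℤ) ≃+ (Fin n → ℤ) where
  toFun a := a ∘ σ.symm
  invFun a := a ∘ σ
  left_inv a := by funext l; simp
  right_inv a := by funext l; simp
  map_add' a b := rfl

noncomputable def Tw (σ : Equiv.Perm (Fin n)) :
    AddMonoidAlgebra ℂ (Fin n → ℤ) ≃ₐ[ℂ] AddMonoidAlgebra ℂ (Fin n → ℤ) :=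
  AddMonoidAlgebra.domCongr ℂ ℂ (swapAddEquiv σ)

lemma Tw_single (σ : Equiv.Perm (Fin n)) (a : Fin n → ℤ) (c : ℂ) :
    Tw σ (AddMonoidAlgebra.single a c) = AddMonoidAlgebra.single (a ∘ σ.symm) c :=
  AddMonoidAlgebra.domCongr_single _ _ _

lemma rename_opApplyC (σ : Equiv.Perm (Fin n)) (Q : AddMonoidAlgebra ℂ (Fin n → ℤ))
    (p : MvPolynomial (Fin n) ℂ) :
    rename σ (opApplyC Q p) = opApplyC (Tw σ Q) (rename σ p) := by
  rw [opApplyC, opApplyC,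
    show (Tw σ Q).coeff = Finsupp.equivMapDomain (swapAddEquiv σ).toEquiv Q.coeff from
      AddMonoidAlgebra.coeff_mapDomainRingEquiv _ _,
    Finsupp.sum_equivMapDomain, map_finsuppSum]
  refine Finsupp.sum_congr fun a _ => ?_
  rw [map_smul, rename_shift]
  rfl

lemma pi_single_comp_swap (i j : Fin n) (hij : i ≠ j) (x : ℤ) :
    (Pi.single i x : Fin n → ℤ) ∘ (Equiv.swap i j).symm = Pi.single j x := by
  funext l
  rw [Equiv.symm_swap]
  simp only [Function.comp_apply]
  rcases eq_or_ne l i with rfl | hli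
  · rw [Equiv.swap_apply_left, Pi.single_eq_of_ne hij.symm, Pi.single_eq_of_ne hij]
  · rcases eq_or_ne l j with rfl | hlj
    · rw [Equiv.swap_apply_right, Pi.single_eq_same, Pi.single_eq_same]
    · rw [Equiv.swap_apply_of_ne_of_ne hli hlj, Pi.single_eq_of_ne hli, Pi.single_eq_of_ne hlj]

lemma Tw_EshC (i j : Fin n) (hij : i ≠ j) : Tw (Equiv.swap i j) (EshC i) = EshC j := by
  rw [EshC, Tw_single, pi_single_comp_swap i j hij, EshC]

lemma Tw_EshInvC (i j : Fin n) (hij : i ≠ j) :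
    Tw (Equiv.swap i j) (EshInvC i) = EshInvC j := by
  rw [EshInvC, Tw_single, pi_single_comp_swap i j hij, EshInvC]

lemma Esh_mul_inv (i : Fin n) : EshC i * EshInvC i = 1 := by
  rw [EshC, EshInvC, AddMonoidAlgebra.single_mul_single, ← Pi.single_add]
  norm_num
  exact AddMonoidAlgebra.one_def.symm

lemma Tw_EshC' (i j : Fin n) (hij : i ≠ j) : Tw (Equiv.swap i j) (EshC j) = EshC i := by
  rw [Equiv.swap_comm]; exact Tw_EshC j i hij.symm

lemma Tw_EshInvC' (i j : Fin n) (hij : i ≠ j) :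
    Tw (Equiv.swap i j) (EshInvC j) = EshInvC i := by
  rw [Equiv.swap_comm]; exact Tw_EshInvC j i hij.symm

lemma Tw_DltC (i j : Fin n) (hij : i ≠ j) : Tw (Equiv.swap i j) (DltC i) = DltC j := by
  rw [DltC, DltC, map_sub, map_one, Tw_EshC i j hij]

lemma Tw_DltC' (i j : Fin n) (hij : i ≠ j) : Tw (Equiv.swap i j) (DltC j) = DltC i := by
  rw [DltC, DltC, map_sub, map_one, Tw_EshC' i j hij]

lemma Tw_Vel (i j : Fin n) (hij : i ≠ j) : Tw (Equiv.swap i j) (Vel i j) = Vel j i := by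
  rw [Vel, Vel, map_add, map_one, map_mul, map_mul, Tw_EshInvC i j hij, Tw_DltC i j hij,
    Tw_DltC' i j hij]

lemma Tw_Vel' (i j : Fin n) (hij : i ≠ j) : Tw (Equiv.swap i j) (Vel j i) = Vel i j := by
  rw [Vel, Vel, map_add, map_one, map_mul, map_mul, Tw_EshInvC' i j hij, Tw_DltC i j hij,
    Tw_DltC' i j hij]

lemma Tw_D1 (i j : Fin n) (hij : i ≠ j) :
    Tw (Equiv.swap i j) (1 + EshC j * DltC i) = 1 + EshC i * DltC j := by
  rw [map_add, map_one, map_mul, Tw_EshC' i j hij, Tw_DltC i j hij]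

lemma Tw_W (i j : Fin n) (hij : i ≠ j) :
    Tw (Equiv.swap i j) (Vel i j + Vel j i) = Vel i j + Vel j i := by
  rw [map_add, Tw_Vel i j hij, Tw_Vel' i j hij, add_comm]

lemma eps_EshC (l : Fin n) : eps n (EshC l) = 1 := by rw [EshC]; exact eps_single _ _

lemma eps_EshInvC (l : Fin n) : eps n (EshInvC l) = 1 := by rw [EshInvC]; exact eps_single _ _

lemma eps_DltC (l : Fin n) : eps n (DltC l) = 0 := by
  rw [DltC, map_sub, map_one, eps_EshC, sub_self]

lemma eps_Vel (l m : Fin n) : eps n (Vel l m) = 1 := by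
  rw [Vel]; simp [map_add, map_mul, eps_DltC]

lemma eps_D (l m : Fin n) : eps n (1 + EshC l * DltC m) = 1 := by
  simp [map_add, map_mul, eps_DltC]

lemma key_identity (i j : Fin n) :
    (1 + EshC j * DltC i) * (EshC j * EshInvC i) * Vel j i
      = Vel i j * (1 + EshC i * DltC j) := by
  have hu := Esh_mul_inv i
  have hv := Esh_mul_inv j
  rw [Vel, Vel, DltC, DltC]
  linear_combination
    (2 - 3*(EshC j) - (EshC j)*(EshInvC j) + 2*(EshC j)^2 + 3*(EshC j)^2*(EshInvC j)
      - 2*(EshC j)^3*(EshInvC j) - (EshC i) + 2*(EshC i)*(EshC j) - (EshC i)*(EshC j)^2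
      - (EshC i)*(EshC j)^2*(EshInvC j) + (EshC i)*(EshC j)^3*(EshInvC j)) * hu +
    (-1 + 3*(EshC j) - 2*(EshC j)^2 + (EshInvC i) - 2*(EshInvC i)*(EshC j)
      + (EshInvC i)*(EshC j)^2 - (EshC i)*(EshC j) + (EshC i)*(EshC j)^2) * hv

end
/-- `T_{k_i,k_{i+1}} G` and `T'_{k_i,k_{i+1}} G` have the same total degree in the two
variables `(k_i, k_{i+1})`; in particular one vanishes iff the other does. -/
theorem T_and_T'_same_degree (n : ℕ) (G : MvPolynomial (Fin n) ℂ) (i j : Fin n)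
    (hij : (i : ℕ) + 1 = (j : ℕ)) :
    degPair i j (Tbig i j G) = degPair i j (Tsml i j G) ∧
    (Tbig i j G = 0 ↔ Tsml i j G = 0) := by
  classical
  have hij' : i ≠ j := by
    intro h
    rw [h] at hij
    omega
  have hH : opApplyC (Vel i j + Vel j i)
      (Function.invFun (opApplyC (Vel i j + Vel j i)) G) = G :=
    Function.invFun_eq (W_surjective i j hij' G)
  set H := Function.invFun (opApplyC (Vel i j + Vel j i)) G with hHdef
  have hTbig : Tbig i j G = opApplyC (Vel i j) H
      + opApplyC (EshC j * EshInvC i) (rename (Equiv.swap i j) (opApplyC (Vel i j) H)) := rfl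
  have h2 : rename (Equiv.swap i j) (opApplyC (Vel i j) H)
      = opApplyC (Vel j i) (rename (Equiv.swap i j) H) := by
    rw [rename_opApplyC, Tw_Vel i j hij']
  have hTsml : Tsml i j G
      = opApplyC ((1 + EshC j * DltC i) * (Vel i j + Vel j i)) H
        + opApplyC ((1 + EshC i * DltC j) * (Vel i j + Vel j i))
            (rename (Equiv.swap i j) H) := by
    have h0 : Tsml i j G = opApplyC (1 + EshC j * DltC i) G
        + rename (Equiv.swap i j) (opApplyC (1 + EshC j * DltC i) G) := rfl
    rw [h0, ← hH, ← opApplyC_mul, rename_opApplyC, map_mul, Tw_D1 i j hij', Tw_W i j hij']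
  -- the central identity
  have hmain : opApplyC ((Vel i j + Vel j i) * ((1 + EshC j * DltC i) * (1 + EshC i * DltC j)))
        (Tbig i j G)
      = opApplyC (Vel i j * (1 + EshC i * DltC j)) (Tsml i j G) := by
    rw [hTbig, hTsml, opApplyC_poly_add, opApplyC_poly_add, h2,
      ← opApplyC_mul, ← opApplyC_mul, ← opApplyC_mul, ← opApplyC_mul, ← opApplyC_mul]
    refine congrArg₂ (· + ·) ?_ ?_
    · refine congrArg (fun Q => opApplyC Q _) ?_
      ring
    · refine congrArg (fun Q => opApplyC Q _) ?_
      linear_combination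
        ((Vel i j + Vel j i) * (1 + EshC i * DltC j)) * key_identity i j
  have epsP : eps n ((Vel i j + Vel j i) * ((1 + EshC j * DltC i) * (1 + EshC i * DltC j)))
      ≠ 0 := by
    rw [map_mul, map_add, map_mul, eps_Vel, eps_Vel, eps_D, eps_D]
    norm_num
  have epsQ : eps n (Vel i j * (1 + EshC i * DltC j)) ≠ 0 := by
    rw [map_mul, eps_Vel, eps_D]
    norm_num
  have hiff : Tbig i j G = 0 ↔ Tsml i j G = 0 := by
    constructor
    · intro h0
      refine opApplyC_injective i j epsQ ?_
      rw [← hmain, h0, opApplyC_poly_zero]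
    · intro h0
      refine opApplyC_injective i j epsP ?_
      rw [hmain, h0, opApplyC_poly_zero]
  refine ⟨?_, hiff⟩
  by_cases hz : Tbig i j G = 0
  · rw [hz, hiff.mp hz]
  · have hTs : Tsml i j G ≠ 0 := fun h0 => hz (hiff.mpr h0)
    have d1 := (opApplyC_eps_ne i j epsP hz).2
    have d2 := (opApplyC_eps_ne i j epsQ hTs).2
    rw [← d1, hmain, d2]
end
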